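/- arXiv:1611.07302 — 7 statements merged into one kernel-verified Lean document; each statement's English description precedes it below -/
import Mathlib

section
/- Let n ≥ 1 and let Λ, K_d be constant symmetric n×n real matrices with Λ positive definite. Let M : ℝ → ℝ^{n×n} be continuously differentiable with M(t) symmetric for every t and m₁·I ⪯ M(t) ⪯ m₂·I for constants 0 < m₁ ≤ m₂ (Loewner order). Let S, D : ℝ → ℝ^{n×n} be such that S(t) is skew-symmetric and D(t) is symmetric for every t, and suppose there exists ε > 0 such that D(t) + K_d + (1/2)·I − (1/4)·(M(t)⁻¹ + M(t)) ⪰ ε·I for all t. Then there exist constants C ≥ 1 and β > 0 such that every differentiable curve (q̃, σ) : ℝ → ℝⁿ × ℝⁿ satisfying the closed-loop error dynamics q̃'(t) = M(t)⁻¹(σ(t) − Λ q̃(t)) and σ'(t) = −M(t)⁻¹ Λ q̃(t) − (S(t) + D(t) − (1/2)·M'(t) + K_d) M(t)⁻¹ σ(t) obeys ‖(q̃(t), σ(t))‖ ≤ C · e^{−β(t−t₀)} · ‖(q̃(t₀), σ(t₀))‖ for all t ≥ t₀; in particular the origin of the closed-loop error system is (uniformly) exponentially stable. -/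
open Matrix

theorem dot_self_nonneg' {n : ℕ} (x : Fin n → ℝ) : 0 ≤ x ⬝ᵥ x :=
  Finset.sum_nonneg fun i _ => mul_self_nonneg (x i)

theorem dot_symm' {n : ℕ} {P : Matrix (Fin n) (Fin n) ℝ} (hP : Pᵀ = P) (a b : Fin n → ℝ) :
    a ⬝ᵥ (P *ᵥ b) = b ⬝ᵥ (P *ᵥ a) := by
  rw [Matrix.dotProduct_mulVec, ← Matrix.mulVec_transpose, hP, dotProduct_comm]

theorem psd_nonneg' {n : ℕ} {P : Matrix (Fin n) (Fin n) ℝ} (hP : P.PosSemidef) (x : Fin n → ℝ) :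
    0 ≤ x ⬝ᵥ (P *ᵥ x) := by simpa using hP.dotProduct_mulVec_nonneg x

theorem psd_cs {n : ℕ} {P : Matrix (Fin n) (Fin n) ℝ} (hP : P.PosSemidef) (x y : Fin n → ℝ) :
    (x ⬝ᵥ (P *ᵥ y))^2 ≤ (x ⬝ᵥ (P *ᵥ x)) * (y ⬝ᵥ (P *ᵥ y)) := by
  have hPt : Pᵀ = P := hP.1
  have key : ∀ r : ℝ, 0 ≤ (y ⬝ᵥ (P *ᵥ y)) * (r * r) + (2 * (x ⬝ᵥ (P *ᵥ y))) * r
      + (x ⬝ᵥ (P *ᵥ x)) := by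
    intro r
    have h0 := hP.dotProduct_mulVec_nonneg (x + r • y)
    simp only [star_trivial, Matrix.mulVec_add, Matrix.mulVec_smul, dotProduct_add,
      add_dotProduct, smul_dotProduct, dotProduct_smul, smul_eq_mul] at h0
    rw [dot_symm' hPt y x] at h0
    ring_nf at h0 ⊢
    linarith [h0]
  have hd := discrim_le_zero key
  rw [discrim] at hd
  nlinarith [hd]

theorem dot_cs' {n : ℕ} (x y : Fin n → ℝ) : (x ⬝ᵥ y)^2 ≤ (x ⬝ᵥ x) * (y ⬝ᵥ y) := by
  have := psd_cs (Matrix.PosSemidef.one (n := Fin n) (R := ℝ)) x y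
  simpa using this

theorem qf_abs_bound {n : ℕ} (A : Matrix (Fin n) (Fin n) ℝ) (x : Fin n → ℝ) :
    x ⬝ᵥ (A *ᵥ x) ≤ (∑ i, ∑ j, |A i j|) * (x ⬝ᵥ x) := by
  have hx : ∀ i : Fin n, x i ^ 2 ≤ x ⬝ᵥ x := by
    intro i
    have h : x ⬝ᵥ x = ∑ j, x j ^ 2 := by simp [dotProduct, sq]
    rw [h]
    exact Finset.single_le_sum (fun j _ => sq_nonneg (x j)) (Finset.mem_univ i)
  have h1 : x ⬝ᵥ (A *ᵥ x) = ∑ i, ∑ j, A i j * (x i * x j) := by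
    simp [dotProduct, Matrix.mulVec, Finset.mul_sum]
    congr 1; ext i; congr 1; ext j; ring
  rw [h1, Finset.sum_mul]
  apply Finset.sum_le_sum
  intro i _
  rw [Finset.sum_mul]
  apply Finset.sum_le_sum
  intro j _
  have habs : A i j * (x i * x j) ≤ |A i j| * |x i * x j| := by
    calc A i j * (x i * x j) ≤ |A i j * (x i * x j)| := le_abs_self _
    _ = |A i j| * |x i * x j| := by rw [abs_mul]
  refine habs.trans ?_
  apply mul_le_mul_of_nonneg_left _ (abs_nonneg _)
  rw [abs_mul]
  nlinarith [hx i, hx j, sq_abs (x i), sq_abs (x j), sq_nonneg (|x i| - |x j|),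
    abs_nonneg (x i), abs_nonneg (x j)]

section
variable {n : ℕ} {A : Matrix (Fin n) (Fin n) ℝ} {c : ℝ}

theorem qf_lb (h : (A - c • (1 : Matrix (Fin n) (Fin n) ℝ)).PosSemidef) (x : Fin n → ℝ) :
    c * (x ⬝ᵥ x) ≤ x ⬝ᵥ (A *ᵥ x) := by
  have := psd_nonneg' h x
  simp only [Matrix.sub_mulVec, Matrix.smul_mulVec, Matrix.one_mulVec,
    dotProduct_sub, dotProduct_smul, smul_eq_mul] at this
  linarith

theorem qf_ub (h : (c • (1 : Matrix (Fin n) (Fin n) ℝ) - A).PosSemidef) (x : Fin n → ℝ) :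
    x ⬝ᵥ (A *ᵥ x) ≤ c * (x ⬝ᵥ x) := by
  have := psd_nonneg' h x
  simp only [Matrix.sub_mulVec, Matrix.smul_mulVec, Matrix.one_mulVec,
    dotProduct_sub, dotProduct_smul, smul_eq_mul] at this
  linarith

theorem matpd_of_lb (hsymm : A.IsSymm) (hc : 0 < c)
    (h : (A - c • (1 : Matrix (Fin n) (Fin n) ℝ)).PosSemidef) : A.PosDef := by
  refine Matrix.PosDef.of_dotProduct_mulVec_pos hsymm (fun x hx => ?_)
  have h1 := qf_lb h x
  have h2 : 0 < x ⬝ᵥ x := by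
    rcases Function.ne_iff.1 hx with ⟨i, hi⟩
    have hs : x ⬝ᵥ x = ∑ j, x j ^ 2 := by simp [dotProduct, sq]
    have hle : x i ^ 2 ≤ x ⬝ᵥ x := by
      rw [hs]; exact Finset.single_le_sum (fun j _ => sq_nonneg (x j)) (Finset.mem_univ i)
    have hxi : 0 < x i ^ 2 := by
      rcases (sq_nonneg (x i)).lt_or_eq with h' | h'
      · exact h'
      · exact absurd (pow_eq_zero_iff (by norm_num) |>.1 h'.symm) hi
    linarith
  simpa using lt_of_lt_of_le (mul_pos hc h2) h1

theorem op_ub (hsymm : Aᵀ = A) (hpsd : A.PosSemidef) (hc : 0 ≤ c)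
    (h : (c • (1 : Matrix (Fin n) (Fin n) ℝ) - A).PosSemidef) (x : Fin n → ℝ) :
    (A *ᵥ x) ⬝ᵥ (A *ᵥ x) ≤ c^2 * (x ⬝ᵥ x) := by
  set w := A *ᵥ x with hw
  have hW : w ⬝ᵥ w = x ⬝ᵥ (A *ᵥ w) := by
    rw [hw]; rw [dotProduct_comm, ← dot_symm' hsymm]
  have hcs := psd_cs hpsd x w
  have h1 : x ⬝ᵥ (A *ᵥ x) ≤ c * (x ⬝ᵥ x) := qf_ub h x
  have h2 : w ⬝ᵥ (A *ᵥ w) ≤ c * (w ⬝ᵥ w) := qf_ub h w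
  have hXn : 0 ≤ x ⬝ᵥ x := dot_self_nonneg' x
  have hWn : 0 ≤ w ⬝ᵥ w := dot_self_nonneg' w
  have hAx : 0 ≤ x ⬝ᵥ (A *ᵥ x) := psd_nonneg' hpsd x
  have hAw : 0 ≤ w ⬝ᵥ (A *ᵥ w) := psd_nonneg' hpsd w
  have key : (w ⬝ᵥ w)^2 ≤ (c * (x ⬝ᵥ x)) * (c * (w ⬝ᵥ w)) := by
    have hcs' : (w ⬝ᵥ w)^2 ≤ (x ⬝ᵥ (A *ᵥ x)) * (w ⬝ᵥ (A *ᵥ w)) := by rw [hW]; exact hcs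
    exact hcs'.trans (mul_le_mul h1 h2 hAw (mul_nonneg hc hXn))
  rcases hWn.lt_or_eq with hpos | hzero
  · nlinarith [key, hpos]
  · rw [← hzero]; positivity

theorem op_lb (hc : 0 ≤ c)
    (h : (A - c • (1 : Matrix (Fin n) (Fin n) ℝ)).PosSemidef) (x : Fin n → ℝ) :
    c^2 * (x ⬝ᵥ x) ≤ (A *ᵥ x) ⬝ᵥ (A *ᵥ x) := by
  set w := A *ᵥ x with hw
  have h1 : c * (x ⬝ᵥ x) ≤ x ⬝ᵥ w := qf_lb h x
  have hcs := dot_cs' x w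
  have hXn : 0 ≤ x ⬝ᵥ x := dot_self_nonneg' x
  have hWn : 0 ≤ w ⬝ᵥ w := dot_self_nonneg' w
  rcases hXn.lt_or_eq with hpos | hzero
  · nlinarith [hcs, h1, mul_nonneg hc hXn]
  · rw [← hzero]; simpa using hWn
end

section
variable {n : ℕ} {A : Matrix (Fin n) (Fin n) ℝ} {m₁ m₂ : ℝ}

theorem inv_qf_bounds (hsymm : A.IsSymm) (hm₁ : 0 < m₁) (hm₁₂ : m₁ ≤ m₂)
    (hlb : (A - m₁ • (1 : Matrix (Fin n) (Fin n) ℝ)).PosSemidef)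
    (hub : (m₂ • (1 : Matrix (Fin n) (Fin n) ℝ) - A).PosSemidef) (x : Fin n → ℝ) :
    (m₁/m₂^2) * (x ⬝ᵥ x) ≤ x ⬝ᵥ (A⁻¹ *ᵥ x) ∧ x ⬝ᵥ (A⁻¹ *ᵥ x) ≤ (m₂/m₁^2) * (x ⬝ᵥ x) := by
  have hpd : A.PosDef := matpd_of_lb hsymm hm₁ hlb
  have hAt : Aᵀ = A := hsymm
  have hm₂ : 0 < m₂ := lt_of_lt_of_le hm₁ hm₁₂
  have hAN : A * A⁻¹ = 1 := Matrix.mul_nonsing_inv A ((Matrix.isUnit_iff_isUnit_det A).1 hpd.isUnit)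
  set u := A⁻¹ *ᵥ x with hu
  have hAu : A *ᵥ u = x := by rw [hu, Matrix.mulVec_mulVec, hAN, Matrix.one_mulVec]
  have hq : x ⬝ᵥ u = u ⬝ᵥ (A *ᵥ u) := by rw [← hAu, dotProduct_comm]
  have hX : x ⬝ᵥ x = (A *ᵥ u) ⬝ᵥ (A *ᵥ u) := by rw [hAu]
  have hop1 : m₁^2 * (u ⬝ᵥ u) ≤ (A *ᵥ u) ⬝ᵥ (A *ᵥ u) := op_lb hm₁.le hlb u
  have hop2 : (A *ᵥ u) ⬝ᵥ (A *ᵥ u) ≤ m₂^2 * (u ⬝ᵥ u) := op_ub hAt hpd.posSemidef hm₂.le hub u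
  have hq1 : m₁ * (u ⬝ᵥ u) ≤ u ⬝ᵥ (A *ᵥ u) := qf_lb hlb u
  have hq2 : u ⬝ᵥ (A *ᵥ u) ≤ m₂ * (u ⬝ᵥ u) := qf_ub hub u
  have hUn : 0 ≤ u ⬝ᵥ u := dot_self_nonneg' u
  constructor
  · rw [hq, hX]
    rw [div_mul_eq_mul_div, div_le_iff₀ (by positivity)]
    nlinarith
  · rw [hq, hX]
    rw [div_mul_eq_mul_div, le_div_iff₀ (by positivity)]
    nlinarith

theorem pd_coercive (hpd : A.PosDef) :
    ∃ b : ℝ, 0 < b ∧ ∀ z : Fin n → ℝ, z ⬝ᵥ z ≤ b * (z ⬝ᵥ (A *ᵥ z)) := by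
  set b' : ℝ := ∑ i, ∑ j, |A⁻¹ i j| with hb'
  have hb'n : 0 ≤ b' := Finset.sum_nonneg fun i _ => Finset.sum_nonneg fun j _ => abs_nonneg _
  refine ⟨b' + 1, by linarith, fun z => ?_⟩
  have hAN : A * A⁻¹ = 1 := Matrix.mul_nonsing_inv A ((Matrix.isUnit_iff_isUnit_det A).1 hpd.isUnit)
  set w := A⁻¹ *ᵥ z with hw
  have hAw : A *ᵥ w = z := by rw [hw, Matrix.mulVec_mulVec, hAN, Matrix.one_mulVec]
  have hcs := psd_cs hpd.posSemidef z w
  rw [hAw] at hcs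
  have hwz : w ⬝ᵥ z ≤ b' * (z ⬝ᵥ z) := by
    calc w ⬝ᵥ z = z ⬝ᵥ w := dotProduct_comm _ _
    _ ≤ b' * (z ⬝ᵥ z) := by rw [hw, hb']; exact qf_abs_bound _ _
  have hL : 0 ≤ z ⬝ᵥ (A *ᵥ z) := psd_nonneg' hpd.posSemidef z
  have hZ : 0 ≤ z ⬝ᵥ z := dot_self_nonneg' z
  rcases hZ.lt_or_eq with hpos | hzero
  · nlinarith [hcs, hwz, hL, hpos, mul_le_mul_of_nonneg_left hwz hL]
  · rw [← hzero]; positivity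
end


theorem det_diffAt {n : ℕ} {A : ℝ → Matrix (Fin n) (Fin n) ℝ} {t : ℝ}
    (h : ∀ i j, DifferentiableAt ℝ (fun s => A s i j) t) :
    DifferentiableAt ℝ (fun s => (A s).det) t := by
  have heq : (fun s => (A s).det)
      = fun s => ∑ σ : Equiv.Perm (Fin n), ((Equiv.Perm.sign σ : ℤ) : ℝ) * ∏ i, A s (σ i) i := by
    funext s
    rw [Matrix.det_apply]
    simp [Units.smul_def, zsmul_eq_mul]
  rw [heq]
  apply DifferentiableAt.fun_sum
  intro σ _
  exact ((HasDerivAt.fun_finsetProd (fun i _ => (h (σ i) i).hasDerivAt)).differentiableAt).const_mul _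

theorem inv_entry_diffAt {n : ℕ} {A : ℝ → Matrix (Fin n) (Fin n) ℝ} {t : ℝ}
    (h : ∀ i j, DifferentiableAt ℝ (fun s => A s i j) t)
    (hdet : (A t).det ≠ 0) (i j : Fin n) :
    DifferentiableAt ℝ (fun s => (A s)⁻¹ i j) t := by
  have heq : (fun s => (A s)⁻¹ i j)
      = fun s => ((A s).det)⁻¹ * ((A s).updateRow j (Pi.single i 1)).det := by
    funext s
    rw [Matrix.inv_def, Ring.inverse_eq_inv', Matrix.smul_apply, Matrix.adjugate_apply]
    simp
  rw [heq]
  apply DifferentiableAt.mul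
  · exact (det_diffAt h).inv hdet
  · apply det_diffAt
    intro k l
    rcases eq_or_ne k j with rfl | hk
    · simp [Matrix.updateRow_apply]
    · simpa [Matrix.updateRow_apply, hk] using h k l

theorem inv_hasDerivAt {n : ℕ} {M : ℝ → Matrix (Fin n) (Fin n) ℝ}
    {M't : Matrix (Fin n) (Fin n) ℝ} {t : ℝ}
    (hd : ∀ i j, HasDerivAt (fun s => M s i j) (M't i j) t)
    (hdet : (M t).det ≠ 0) (hinv : ∀ s, M s * (M s)⁻¹ = 1) (i j : Fin n) :
    HasDerivAt (fun s => (M s)⁻¹ i j) ((-((M t)⁻¹ * M't * (M t)⁻¹)) i j) t := by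
  set N : Matrix (Fin n) (Fin n) ℝ := (M t)⁻¹ with hN
  have hNM : N * M t = 1 := Matrix.nonsing_inv_mul (M t) (Ne.isUnit hdet)
  have hdiff : ∀ k l, DifferentiableAt ℝ (fun s => (M s)⁻¹ k l) t :=
    inv_entry_diffAt (fun k l => (hd k l).differentiableAt) hdet
  set dN : Matrix (Fin n) (Fin n) ℝ :=
    Matrix.of (fun k l => deriv (fun s => (M s)⁻¹ k l) t) with hdN
  have hder : ∀ k l, HasDerivAt (fun s => (M s)⁻¹ k l) (dN k l) t := fun k l =>
    (hdiff k l).hasDerivAt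
  have hkey : M't * N + M t * dN = 0 := by
    ext k l
    have h1 : HasDerivAt (fun s => ∑ m, M s k m * (M s)⁻¹ m l)
        (∑ m, (M't k m * N m l + M t k m * dN m l)) t :=
      HasDerivAt.fun_sum (fun m _ => (hd k m).mul (hder m l))
    have h2 : (fun s => ∑ m, M s k m * (M s)⁻¹ m l) = fun _ => (1 : Matrix (Fin n) (Fin n) ℝ) k l := by
      funext s
      rw [← Matrix.mul_apply, hinv s]
    rw [h2] at h1
    have h3 := (hasDerivAt_const t ((1 : Matrix (Fin n) (Fin n) ℝ) k l)).unique h1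
    simp only [Matrix.add_apply, Matrix.mul_apply, Matrix.zero_apply]
    rw [← Finset.sum_add_distrib]
    exact h3.symm
  have hMdN : M t * dN = -(M't * N) := by
    rw [eq_neg_iff_add_eq_zero, add_comm]
    exact hkey
  have hdNval : dN = -(N * M't * N) := by
    calc dN = (N * M t) * dN := by rw [hNM, Matrix.one_mul]
    _ = N * (M t * dN) := by rw [Matrix.mul_assoc]
    _ = N * (-(M't * N)) := by rw [hMdN]
    _ = -(N * M't * N) := by rw [Matrix.mul_neg, Matrix.mul_assoc]
  have := hder i j
  rw [hdNval] at this
  exact this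


theorem hasDerivAt_quadform {n : ℕ} {f g : ℝ → Fin n → ℝ} {A : ℝ → Matrix (Fin n) (Fin n) ℝ}
    {f' g' : Fin n → ℝ} {A' : Matrix (Fin n) (Fin n) ℝ} {t : ℝ}
    (hf : HasDerivAt f f' t) (hg : HasDerivAt g g' t)
    (hA : ∀ i j, HasDerivAt (fun s => A s i j) (A' i j) t) :
    HasDerivAt (fun s => f s ⬝ᵥ (A s *ᵥ g s))
      (f' ⬝ᵥ (A t *ᵥ g t) + f t ⬝ᵥ (A' *ᵥ g t) + f t ⬝ᵥ (A t *ᵥ g')) t := by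
  have hfi := fun i => hasDerivAt_pi.1 hf i
  have hgi := fun i => hasDerivAt_pi.1 hg i
  have hfun : (fun s => f s ⬝ᵥ (A s *ᵥ g s))
      = fun s => ∑ i, f s i * ∑ j, A s i j * g s j := by
    funext s; simp [dotProduct, Matrix.mulVec]
  have hval : f' ⬝ᵥ (A t *ᵥ g t) + f t ⬝ᵥ (A' *ᵥ g t) + f t ⬝ᵥ (A t *ᵥ g')
      = ∑ i, (f' i * ∑ j, A t i j * g t j
        + f t i * (∑ j, (A' i j * g t j + A t i j * g' j))) := by
    simp [dotProduct, Matrix.mulVec, Finset.sum_add_distrib, mul_add, Finset.mul_sum]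
    ring_nf
  rw [hfun, hval]
  exact HasDerivAt.fun_sum fun i _ =>
    (hfi i).mul (HasDerivAt.fun_sum fun j _ => ((hA i j).mul (hgi j)))

theorem gronwall_exp {V Vd : ℝ → ℝ} {b : ℝ}
    (hV : ∀ t, HasDerivAt V (Vd t) t) (hle : ∀ t, Vd t + b * V t ≤ 0)
    {t₀ t : ℝ} (h : t₀ ≤ t) : V t ≤ V t₀ * Real.exp (-(b * (t - t₀))) := by
  set g : ℝ → ℝ := fun s => V s * Real.exp (b * s) with hg
  have hgd : ∀ s, HasDerivAt g ((Vd s + b * V s) * Real.exp (b * s)) s := by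
    intro s
    have he : HasDerivAt (fun r : ℝ => Real.exp (b * r)) (b * Real.exp (b * s)) s := by
      simpa [mul_comm, Function.comp_def] using (Real.hasDerivAt_exp (b * s)).comp s
        ((hasDerivAt_id s).const_mul b)
    have := (hV s).mul he
    exact this.congr_deriv (by ring)
  have hanti : AntitoneOn g Set.univ := by
    apply antitoneOn_of_deriv_nonpos convex_univ
    · exact fun s _ => ((hgd s).continuousAt).continuousWithinAt
    · intro s _
      exact ((hgd s).differentiableAt).differentiableWithinAt
    · intro s _
      rw [(hgd s).deriv]
      exact mul_nonpos_of_nonpos_of_nonneg (hle s) (Real.exp_nonneg _)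
  have hgle : g t ≤ g t₀ := hanti (Set.mem_univ t₀) (Set.mem_univ t) h
  have hexp : (0:ℝ) < Real.exp (b * t) := Real.exp_pos _
  rw [hg] at hgle
  simp only at hgle
  have := mul_le_mul_of_nonneg_right hgle (le_of_lt (Real.exp_pos (-(b * t))))
  calc V t = V t * Real.exp (b * t) * Real.exp (-(b * t)) := by
        rw [mul_assoc, ← Real.exp_add]; simp
  _ ≤ V t₀ * Real.exp (b * t₀) * Real.exp (-(b * t)) := this
  _ = V t₀ * Real.exp (-(b * (t - t₀))) := by
        rw [mul_assoc, ← Real.exp_add]; ring_nf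

theorem scalar_amgm {th P Q c : ℝ} (hth : 0 < th) (hP : 0 ≤ P) (hQ : 0 ≤ Q)
    (hc : c^2 ≤ P*Q) : 2*c ≤ (1/th)*P + th*Q := by
  have hmul : (1/th) * th = 1 := one_div_mul_cancel hth.ne'
  have hab : ((1/th)*P)*(th*Q) = P*Q := by
    calc ((1/th)*P)*(th*Q) = ((1/th)*th)*(P*Q) := by ring
    _ = P*Q := by rw [hmul]; ring
  have h2 : (2*c)^2 ≤ ((1/th)*P + th*Q)^2 := by
    nlinarith [sq_nonneg ((1/th)*P - th*Q), hc, hab]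
  have hsum : 0 ≤ (1/th)*P + th*Q := by positivity
  nlinarith [h2, hsum]

theorem scalar_coer {L X U c : ℝ} (hc : 0 < c) (hL : 0 ≤ L) (hU : 0 ≤ U)
    (hXL : X ≤ c*L) (hLU : L^2 ≤ X*U) : L ≤ c*U := by
  rcases hL.lt_or_eq with hpos | hzero
  · nlinarith [hLU, mul_le_mul_of_nonneg_right hXL hU, hpos]
  · rw [← hzero]; positivity

section KeyIneq
variable {n : ℕ} {Λ Kd Mt M't St Dt : Matrix (Fin n) (Fin n) ℝ} {m₁ m₂ ε bΛ b : ℝ}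

theorem key_ineq (hΛsymm : Λ.IsSymm) (hΛpd : Λ.PosDef) (hMtsymm : Mt.IsSymm)
    (hSt : Stᵀ = -St)
    (hm₁ : 0 < m₁) (hm₁₂ : m₁ ≤ m₂) (hε : 0 < ε) (hbΛ : 0 < bΛ)
    (hMlb : (Mt - m₁ • (1 : Matrix (Fin n) (Fin n) ℝ)).PosSemidef)
    (hMub : (m₂ • (1 : Matrix (Fin n) (Fin n) ℝ) - Mt).PosSemidef)
    (hgain : (Dt + Kd + (1/2 : ℝ) • (1 : Matrix (Fin n) (Fin n) ℝ)
        - (1/4 : ℝ) • (Mt⁻¹ + Mt) - ε • (1 : Matrix (Fin n) (Fin n) ℝ)).PosSemidef)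
    (hΛlb : ∀ z : Fin n → ℝ, z ⬝ᵥ z ≤ bΛ * (z ⬝ᵥ (Λ *ᵥ z)))
    (hb1 : b ≤ (2 - 1/(1/2 + ε/(m₂ + m₂/m₁^2))) * (m₁/(m₂^2 * bΛ)))
    (hb2 : b ≤ ε/m₂)
    (x s : Fin n → ℝ) :
    (Mt⁻¹ *ᵥ (s - Λ *ᵥ x)) ⬝ᵥ (Λ *ᵥ x) + (x ⬝ᵥ ((0 : Matrix (Fin n) (Fin n) ℝ) *ᵥ x)
        + x ⬝ᵥ (Λ *ᵥ (Mt⁻¹ *ᵥ (s - Λ *ᵥ x))))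
      + ((-(Mt⁻¹ *ᵥ (Λ *ᵥ x)) - (St + Dt - (1/2 : ℝ) • M't + Kd) *ᵥ (Mt⁻¹ *ᵥ s)) ⬝ᵥ (Mt⁻¹ *ᵥ s)
        + s ⬝ᵥ ((-(Mt⁻¹ * M't * Mt⁻¹)) *ᵥ s)
        + s ⬝ᵥ (Mt⁻¹ *ᵥ (-(Mt⁻¹ *ᵥ (Λ *ᵥ x)) - (St + Dt - (1/2 : ℝ) • M't + Kd) *ᵥ (Mt⁻¹ *ᵥ s))))
      + b * (x ⬝ᵥ (Λ *ᵥ x) + s ⬝ᵥ (Mt⁻¹ *ᵥ s)) ≤ 0 := by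
  have hm₂ : 0 < m₂ := lt_of_lt_of_le hm₁ hm₁₂
  have hMpd : Mt.PosDef := matpd_of_lb hMtsymm hm₁ hMlb
  have hMt : Mtᵀ = Mt := hMtsymm
  have hΛt : Λᵀ = Λ := hΛsymm
  have hMN : Mt * Mt⁻¹ = 1 :=
    Matrix.mul_nonsing_inv Mt ((Matrix.isUnit_iff_isUnit_det Mt).1 hMpd.isUnit)
  have hNM : Mt⁻¹ * Mt = 1 :=
    Matrix.nonsing_inv_mul Mt ((Matrix.isUnit_iff_isUnit_det Mt).1 hMpd.isUnit)
  have hNpsd : (Mt⁻¹).PosSemidef := hMpd.posSemidef.inv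
  have hNt : (Mt⁻¹)ᵀ = Mt⁻¹ := hNpsd.1
  -- abbreviations (as plain terms)
  -- u = Λ *ᵥ x, y = Mt⁻¹ *ᵥ s
  have hMy : Mt *ᵥ (Mt⁻¹ *ᵥ s) = s := by rw [Matrix.mulVec_mulVec, hMN, Matrix.one_mulVec]
  -- Step 1 : rewrite the derivative terms
  have h1 : (Mt⁻¹ *ᵥ (s - Λ *ᵥ x)) ⬝ᵥ (Λ *ᵥ x)
      = (Λ *ᵥ x) ⬝ᵥ (Mt⁻¹ *ᵥ s) - (Λ *ᵥ x) ⬝ᵥ (Mt⁻¹ *ᵥ (Λ *ᵥ x)) := by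
    rw [dotProduct_comm, dot_symm' hNt, sub_dotProduct,
      dot_symm' hNt s (Λ *ᵥ x)]
  have h2 : x ⬝ᵥ ((0 : Matrix (Fin n) (Fin n) ℝ) *ᵥ x) = 0 := by
    simp [Matrix.zero_mulVec]
  have h3 : x ⬝ᵥ (Λ *ᵥ (Mt⁻¹ *ᵥ (s - Λ *ᵥ x)))
      = (Λ *ᵥ x) ⬝ᵥ (Mt⁻¹ *ᵥ s) - (Λ *ᵥ x) ⬝ᵥ (Mt⁻¹ *ᵥ (Λ *ᵥ x)) := by
    rw [dot_symm' hΛt, h1]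
  have hskew : (Mt⁻¹ *ᵥ s) ⬝ᵥ (St *ᵥ (Mt⁻¹ *ᵥ s)) = 0 := by
    have e1 : (Mt⁻¹ *ᵥ s) ⬝ᵥ (St *ᵥ (Mt⁻¹ *ᵥ s))
        = (Stᵀ *ᵥ (Mt⁻¹ *ᵥ s)) ⬝ᵥ (Mt⁻¹ *ᵥ s) := by
      rw [Matrix.dotProduct_mulVec, ← Matrix.mulVec_transpose]
    have e2 : (Stᵀ *ᵥ (Mt⁻¹ *ᵥ s)) ⬝ᵥ (Mt⁻¹ *ᵥ s)
        = -((Mt⁻¹ *ᵥ s) ⬝ᵥ (St *ᵥ (Mt⁻¹ *ᵥ s))) := by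
      rw [hSt, Matrix.neg_mulVec, neg_dotProduct, dotProduct_comm]
    linarith [e1.trans e2]
  have h4 : (-(Mt⁻¹ *ᵥ (Λ *ᵥ x)) - (St + Dt - (1/2 : ℝ) • M't + Kd) *ᵥ (Mt⁻¹ *ᵥ s))
        ⬝ᵥ (Mt⁻¹ *ᵥ s)
      = -((Λ *ᵥ x) ⬝ᵥ (Mt⁻¹ *ᵥ (Mt⁻¹ *ᵥ s)))
        - ((Mt⁻¹ *ᵥ s) ⬝ᵥ (Dt *ᵥ (Mt⁻¹ *ᵥ s)) + (Mt⁻¹ *ᵥ s) ⬝ᵥ (Kd *ᵥ (Mt⁻¹ *ᵥ s)))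
        + (1/2) * ((Mt⁻¹ *ᵥ s) ⬝ᵥ (M't *ᵥ (Mt⁻¹ *ᵥ s))) := by
    rw [sub_dotProduct, neg_dotProduct]
    rw [Matrix.add_mulVec, Matrix.sub_mulVec, Matrix.add_mulVec, Matrix.smul_mulVec]
    rw [add_dotProduct, sub_dotProduct, add_dotProduct,
      smul_dotProduct, smul_eq_mul]
    rw [dotProduct_comm (Mt⁻¹ *ᵥ (Λ *ᵥ x)) (Mt⁻¹ *ᵥ s),
      dot_symm' hNt (Mt⁻¹ *ᵥ s) (Λ *ᵥ x)]
    have c1 : (St *ᵥ (Mt⁻¹ *ᵥ s)) ⬝ᵥ (Mt⁻¹ *ᵥ s) = 0 := by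
      rw [dotProduct_comm]; exact hskew
    have c2 : (Dt *ᵥ (Mt⁻¹ *ᵥ s)) ⬝ᵥ (Mt⁻¹ *ᵥ s)
        = (Mt⁻¹ *ᵥ s) ⬝ᵥ (Dt *ᵥ (Mt⁻¹ *ᵥ s)) := dotProduct_comm _ _
    have c3 : (Kd *ᵥ (Mt⁻¹ *ᵥ s)) ⬝ᵥ (Mt⁻¹ *ᵥ s)
        = (Mt⁻¹ *ᵥ s) ⬝ᵥ (Kd *ᵥ (Mt⁻¹ *ᵥ s)) := dotProduct_comm _ _
    have c4 : (M't *ᵥ (Mt⁻¹ *ᵥ s)) ⬝ᵥ (Mt⁻¹ *ᵥ s)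
        = (Mt⁻¹ *ᵥ s) ⬝ᵥ (M't *ᵥ (Mt⁻¹ *ᵥ s)) := dotProduct_comm _ _
    rw [c1, c2, c3, c4]
    ring
  have h5 : s ⬝ᵥ ((-(Mt⁻¹ * M't * Mt⁻¹)) *ᵥ s)
      = -((Mt⁻¹ *ᵥ s) ⬝ᵥ (M't *ᵥ (Mt⁻¹ *ᵥ s))) := by
    rw [Matrix.neg_mulVec, dotProduct_neg, neg_inj, ← Matrix.mulVec_mulVec,
      ← Matrix.mulVec_mulVec, dot_symm' hNt s (M't *ᵥ (Mt⁻¹ *ᵥ s)), dotProduct_comm]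
  have h6 : s ⬝ᵥ (Mt⁻¹ *ᵥ (-(Mt⁻¹ *ᵥ (Λ *ᵥ x))
        - (St + Dt - (1/2 : ℝ) • M't + Kd) *ᵥ (Mt⁻¹ *ᵥ s)))
      = (-(Mt⁻¹ *ᵥ (Λ *ᵥ x)) - (St + Dt - (1/2 : ℝ) • M't + Kd) *ᵥ (Mt⁻¹ *ᵥ s))
        ⬝ᵥ (Mt⁻¹ *ᵥ s) :=
    dot_symm' hNt s _
  -- scalar abbrev comments: uy = (Λ*ᵥx)⬝ᵥ(Mt⁻¹*ᵥs), uNy, P, Y, R, Rs, GD, GK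
  have hYnn : (0:ℝ) ≤ (Mt⁻¹ *ᵥ s) ⬝ᵥ (Mt⁻¹ *ᵥ s) := dot_self_nonneg' _
  have hUnn : (0:ℝ) ≤ (Λ *ᵥ x) ⬝ᵥ (Λ *ᵥ x) := dot_self_nonneg' _
  have hPnn : (0:ℝ) ≤ (Λ *ᵥ x) ⬝ᵥ (Mt⁻¹ *ᵥ (Λ *ᵥ x)) := psd_nonneg' hNpsd _
  have hRsnn : (0:ℝ) ≤ s ⬝ᵥ (Mt⁻¹ *ᵥ s) := psd_nonneg' hNpsd s
  have hLnn : (0:ℝ) ≤ x ⬝ᵥ (Λ *ᵥ x) := psd_nonneg' hΛpd.posSemidef x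
  have hcM : (0:ℝ) < m₂ + m₂/m₁^2 := by positivity
  have hθpos : (0:ℝ) < 1/2 + ε/(m₂ + m₂/m₁^2) := by positivity
  have hθgt : (1:ℝ)/2 < 1/2 + ε/(m₂ + m₂/m₁^2) :=
    lt_add_of_pos_right _ (div_pos hε hcM)
  have hinvθ : 1/(1/2 + ε/(m₂ + m₂/m₁^2)) < 2 := by
    rw [div_lt_iff₀ hθpos]; linarith
  have hδpos : (0:ℝ) < 2 - 1/(1/2 + ε/(m₂ + m₂/m₁^2)) := by linarith
  -- gain inequality in scalar form
  have hRsY : s ⬝ᵥ (Mt⁻¹ *ᵥ s) ≤ m₂ * ((Mt⁻¹ *ᵥ s) ⬝ᵥ (Mt⁻¹ *ᵥ s)) := by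
    have h0 := qf_ub hMub (Mt⁻¹ *ᵥ s)
    rw [hMy, dotProduct_comm (Mt⁻¹ *ᵥ s) s] at h0
    exact h0
  have hRub : (Mt⁻¹ *ᵥ s) ⬝ᵥ (Mt⁻¹ *ᵥ (Mt⁻¹ *ᵥ s))
      ≤ (m₂/m₁^2) * ((Mt⁻¹ *ᵥ s) ⬝ᵥ (Mt⁻¹ *ᵥ s)) :=
    (inv_qf_bounds hMtsymm hm₁ hm₁₂ hMlb hMub (Mt⁻¹ *ᵥ s)).2
  have hPlb : (m₁/m₂^2) * ((Λ *ᵥ x) ⬝ᵥ (Λ *ᵥ x)) ≤ (Λ *ᵥ x) ⬝ᵥ (Mt⁻¹ *ᵥ (Λ *ᵥ x)) :=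
    (inv_qf_bounds hMtsymm hm₁ hm₁₂ hMlb hMub (Λ *ᵥ x)).1
  have hG : (1/4) * ((Mt⁻¹ *ᵥ s) ⬝ᵥ (Mt⁻¹ *ᵥ (Mt⁻¹ *ᵥ s))) + (1/4) * (s ⬝ᵥ (Mt⁻¹ *ᵥ s))
      + ε * ((Mt⁻¹ *ᵥ s) ⬝ᵥ (Mt⁻¹ *ᵥ s))
      ≤ (Mt⁻¹ *ᵥ s) ⬝ᵥ (Dt *ᵥ (Mt⁻¹ *ᵥ s)) + (Mt⁻¹ *ᵥ s) ⬝ᵥ (Kd *ᵥ (Mt⁻¹ *ᵥ s))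
        + (1/2) * ((Mt⁻¹ *ᵥ s) ⬝ᵥ (Mt⁻¹ *ᵥ s)) := by
    have h0 := psd_nonneg' hgain (Mt⁻¹ *ᵥ s)
    simp only [Matrix.sub_mulVec, Matrix.add_mulVec, Matrix.smul_mulVec,
      Matrix.one_mulVec, dotProduct_sub, dotProduct_add,
      dotProduct_smul, smul_eq_mul] at h0
    rw [hMy] at h0
    rw [dotProduct_comm (Mt⁻¹ *ᵥ s) s] at h0
    linarith
  -- Cauchy-Schwarz for the cross term
  have hNv : Mt⁻¹ *ᵥ (s - Mt⁻¹ *ᵥ s) = Mt⁻¹ *ᵥ s - Mt⁻¹ *ᵥ (Mt⁻¹ *ᵥ s) :=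
    Matrix.mulVec_sub _ _ _
  have hsNNs : s ⬝ᵥ (Mt⁻¹ *ᵥ (Mt⁻¹ *ᵥ s)) = (Mt⁻¹ *ᵥ s) ⬝ᵥ (Mt⁻¹ *ᵥ s) :=
    dot_symm' hNt s (Mt⁻¹ *ᵥ s)
  have hv2 : (s - Mt⁻¹ *ᵥ s) ⬝ᵥ (Mt⁻¹ *ᵥ (s - Mt⁻¹ *ᵥ s))
      = s ⬝ᵥ (Mt⁻¹ *ᵥ s) - 2 * ((Mt⁻¹ *ᵥ s) ⬝ᵥ (Mt⁻¹ *ᵥ s))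
        + (Mt⁻¹ *ᵥ s) ⬝ᵥ (Mt⁻¹ *ᵥ (Mt⁻¹ *ᵥ s)) := by
    rw [hNv, sub_dotProduct, dotProduct_sub, dotProduct_sub, hsNNs]
    ring
  have hQnn : (0:ℝ) ≤ s ⬝ᵥ (Mt⁻¹ *ᵥ s) - 2 * ((Mt⁻¹ *ᵥ s) ⬝ᵥ (Mt⁻¹ *ᵥ s))
      + (Mt⁻¹ *ᵥ s) ⬝ᵥ (Mt⁻¹ *ᵥ (Mt⁻¹ *ᵥ s)) := by
    have h0 := psd_nonneg' hNpsd (s - Mt⁻¹ *ᵥ s)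
    rwa [hv2] at h0
  have hv1 : (Λ *ᵥ x) ⬝ᵥ (Mt⁻¹ *ᵥ (s - Mt⁻¹ *ᵥ s))
      = (Λ *ᵥ x) ⬝ᵥ (Mt⁻¹ *ᵥ s) - (Λ *ᵥ x) ⬝ᵥ (Mt⁻¹ *ᵥ (Mt⁻¹ *ᵥ s)) := by
    rw [hNv, dotProduct_sub]
  have hcs : ((Λ *ᵥ x) ⬝ᵥ (Mt⁻¹ *ᵥ s) - (Λ *ᵥ x) ⬝ᵥ (Mt⁻¹ *ᵥ (Mt⁻¹ *ᵥ s)))^2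
      ≤ ((Λ *ᵥ x) ⬝ᵥ (Mt⁻¹ *ᵥ (Λ *ᵥ x)))
        * (s ⬝ᵥ (Mt⁻¹ *ᵥ s) - 2 * ((Mt⁻¹ *ᵥ s) ⬝ᵥ (Mt⁻¹ *ᵥ s))
          + (Mt⁻¹ *ᵥ s) ⬝ᵥ (Mt⁻¹ *ᵥ (Mt⁻¹ *ᵥ s))) := by
    have h0 := psd_cs hNpsd (Λ *ᵥ x) (s - Mt⁻¹ *ᵥ s)
    rwa [hv1, hv2] at h0
  -- cross-term bound
  have hcross : 2 * ((Λ *ᵥ x) ⬝ᵥ (Mt⁻¹ *ᵥ s) - (Λ *ᵥ x) ⬝ᵥ (Mt⁻¹ *ᵥ (Mt⁻¹ *ᵥ s)))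
      ≤ (1/(1/2 + ε/(m₂ + m₂/m₁^2))) * ((Λ *ᵥ x) ⬝ᵥ (Mt⁻¹ *ᵥ (Λ *ᵥ x)))
        + (1/2 + ε/(m₂ + m₂/m₁^2)) * (s ⬝ᵥ (Mt⁻¹ *ᵥ s)
          - 2 * ((Mt⁻¹ *ᵥ s) ⬝ᵥ (Mt⁻¹ *ᵥ s)) + (Mt⁻¹ *ᵥ s) ⬝ᵥ (Mt⁻¹ *ᵥ (Mt⁻¹ *ᵥ s))) :=
    scalar_amgm hθpos hPnn hQnn hcs
  -- bound (θ - 1/2) Q ≤ ε Y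
  have hQub : s ⬝ᵥ (Mt⁻¹ *ᵥ s) - 2 * ((Mt⁻¹ *ᵥ s) ⬝ᵥ (Mt⁻¹ *ᵥ s))
      + (Mt⁻¹ *ᵥ s) ⬝ᵥ (Mt⁻¹ *ᵥ (Mt⁻¹ *ᵥ s))
      ≤ (m₂ + m₂/m₁^2) * ((Mt⁻¹ *ᵥ s) ⬝ᵥ (Mt⁻¹ *ᵥ s)) := by
    have e : (m₂ + m₂/m₁^2) * ((Mt⁻¹ *ᵥ s) ⬝ᵥ (Mt⁻¹ *ᵥ s))
        = m₂ * ((Mt⁻¹ *ᵥ s) ⬝ᵥ (Mt⁻¹ *ᵥ s)) + (m₂/m₁^2) * ((Mt⁻¹ *ᵥ s) ⬝ᵥ (Mt⁻¹ *ᵥ s)) := by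
      ring
    rw [e]; linarith
  have hQeps : (ε/(m₂ + m₂/m₁^2)) * (s ⬝ᵥ (Mt⁻¹ *ᵥ s)
      - 2 * ((Mt⁻¹ *ᵥ s) ⬝ᵥ (Mt⁻¹ *ᵥ s)) + (Mt⁻¹ *ᵥ s) ⬝ᵥ (Mt⁻¹ *ᵥ (Mt⁻¹ *ᵥ s)))
      ≤ ε * ((Mt⁻¹ *ᵥ s) ⬝ᵥ (Mt⁻¹ *ᵥ s)) := by
    have h0 := mul_le_mul_of_nonneg_left hQub (le_of_lt (div_pos hε hcM))
    have egen : ∀ Yv : ℝ, (ε/(m₂ + m₂/m₁^2)) * ((m₂ + m₂/m₁^2) * Yv) = ε * Yv := by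
      intro Yv; rw [← mul_assoc, div_mul_cancel₀ _ hcM.ne']
    have e := egen ((Mt⁻¹ *ᵥ s) ⬝ᵥ (Mt⁻¹ *ᵥ s))
    linarith [h0, e.le, e.ge]
  -- L/bΛ ≤ U and then P lower bound in terms of L
  have hXL : x ⬝ᵥ x ≤ bΛ * (x ⬝ᵥ (Λ *ᵥ x)) := hΛlb x
  have hLU : (x ⬝ᵥ (Λ *ᵥ x))^2 ≤ (x ⬝ᵥ x) * ((Λ *ᵥ x) ⬝ᵥ (Λ *ᵥ x)) := dot_cs' x (Λ *ᵥ x)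
  have hULb : x ⬝ᵥ (Λ *ᵥ x) ≤ bΛ * ((Λ *ᵥ x) ⬝ᵥ (Λ *ᵥ x)) :=
    scalar_coer hbΛ hLnn hUnn hXL hLU
  have k2 : (m₁/(m₂^2*bΛ)) * (x ⬝ᵥ (Λ *ᵥ x)) ≤ (Λ *ᵥ x) ⬝ᵥ (Mt⁻¹ *ᵥ (Λ *ᵥ x)) := by
    have e1gen : ∀ Uv : ℝ, (m₁/(m₂^2*bΛ)) * (bΛ * Uv) = (m₁/m₂^2) * Uv := by
      intro Uv
      field_simp
    have e1 := e1gen ((Λ *ᵥ x) ⬝ᵥ (Λ *ᵥ x))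
    calc (m₁/(m₂^2*bΛ)) * (x ⬝ᵥ (Λ *ᵥ x))
        ≤ (m₁/(m₂^2*bΛ)) * (bΛ * ((Λ *ᵥ x) ⬝ᵥ (Λ *ᵥ x))) :=
          mul_le_mul_of_nonneg_left hULb (by positivity)
    _ = (m₁/m₂^2) * ((Λ *ᵥ x) ⬝ᵥ (Λ *ᵥ x)) := e1
    _ ≤ (Λ *ᵥ x) ⬝ᵥ (Mt⁻¹ *ᵥ (Λ *ᵥ x)) := hPlb
  have k3 : (2 - 1/(1/2 + ε/(m₂ + m₂/m₁^2))) * ((m₁/(m₂^2*bΛ)) * (x ⬝ᵥ (Λ *ᵥ x)))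
      ≤ (2 - 1/(1/2 + ε/(m₂ + m₂/m₁^2))) * ((Λ *ᵥ x) ⬝ᵥ (Mt⁻¹ *ᵥ (Λ *ᵥ x))) :=
    mul_le_mul_of_nonneg_left k2 hδpos.le
  have hbP : b * (x ⬝ᵥ (Λ *ᵥ x))
      ≤ ((2 - 1/(1/2 + ε/(m₂ + m₂/m₁^2))) * (m₁/(m₂^2 * bΛ))) * (x ⬝ᵥ (Λ *ᵥ x)) :=
    mul_le_mul_of_nonneg_right hb1 hLnn
  have hbRs : b * (s ⬝ᵥ (Mt⁻¹ *ᵥ s)) ≤ (ε/m₂) * (s ⬝ᵥ (Mt⁻¹ *ᵥ s)) :=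
    mul_le_mul_of_nonneg_right hb2 hRsnn
  have hRse : (ε/m₂) * (s ⬝ᵥ (Mt⁻¹ *ᵥ s)) ≤ ε * ((Mt⁻¹ *ᵥ s) ⬝ᵥ (Mt⁻¹ *ᵥ s)) := by
    have h0 := mul_le_mul_of_nonneg_left hRsY (le_of_lt (div_pos hε hm₂))
    have egen : ∀ Yv : ℝ, (ε/m₂) * (m₂ * Yv) = ε * Yv := by
      intro Yv; rw [← mul_assoc, div_mul_cancel₀ _ hm₂.ne']
    have e := egen ((Mt⁻¹ *ᵥ s) ⬝ᵥ (Mt⁻¹ *ᵥ s))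
    linarith [h0, e.le, e.ge]
  -- ring bridges
  have br1 : (1/(1/2 + ε/(m₂ + m₂/m₁^2))) * ((Λ *ᵥ x) ⬝ᵥ (Mt⁻¹ *ᵥ (Λ *ᵥ x)))
      - 2 * ((Λ *ᵥ x) ⬝ᵥ (Mt⁻¹ *ᵥ (Λ *ᵥ x)))
      = -((2 - 1/(1/2 + ε/(m₂ + m₂/m₁^2))) * ((Λ *ᵥ x) ⬝ᵥ (Mt⁻¹ *ᵥ (Λ *ᵥ x)))) := by ring
  have br2 : (1/2 + ε/(m₂ + m₂/m₁^2)) * (s ⬝ᵥ (Mt⁻¹ *ᵥ s)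
        - 2 * ((Mt⁻¹ *ᵥ s) ⬝ᵥ (Mt⁻¹ *ᵥ s)) + (Mt⁻¹ *ᵥ s) ⬝ᵥ (Mt⁻¹ *ᵥ (Mt⁻¹ *ᵥ s)))
      - (ε/(m₂ + m₂/m₁^2)) * (s ⬝ᵥ (Mt⁻¹ *ᵥ s)
        - 2 * ((Mt⁻¹ *ᵥ s) ⬝ᵥ (Mt⁻¹ *ᵥ s)) + (Mt⁻¹ *ᵥ s) ⬝ᵥ (Mt⁻¹ *ᵥ (Mt⁻¹ *ᵥ s)))
      = (1/2) * (s ⬝ᵥ (Mt⁻¹ *ᵥ s)) - (Mt⁻¹ *ᵥ s) ⬝ᵥ (Mt⁻¹ *ᵥ s)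
        + (1/2) * ((Mt⁻¹ *ᵥ s) ⬝ᵥ (Mt⁻¹ *ᵥ (Mt⁻¹ *ᵥ s))) := by ring
  have br3 : ((2 - 1/(1/2 + ε/(m₂ + m₂/m₁^2))) * (m₁/(m₂^2 * bΛ))) * (x ⬝ᵥ (Λ *ᵥ x))
      = (2 - 1/(1/2 + ε/(m₂ + m₂/m₁^2))) * ((m₁/(m₂^2*bΛ)) * (x ⬝ᵥ (Λ *ᵥ x))) := by ring
  -- final assembly
  rw [h1, h2, h3, h6, h4, h5]
  linarith [hcross, hG, hQeps, k3, hbP, hbRs, hRse, br1.le, br1.ge, br2.le, br2.ge, br3.le, br3.ge]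

end KeyIneq


/-- Exponential stability of the closed-loop tracking error system of a
fully-actuated mechanical port-Hamiltonian system (Proposition 1, item 2). -/
theorem closed_loop_error_system_exponentially_stable
    {n : ℕ} (hn : 1 ≤ n)
    (Λ Kd : Matrix (Fin n) (Fin n) ℝ) (hΛsymm : Λ.IsSymm) (hKdsymm : Kd.IsSymm)
    (hΛpd : Λ.PosDef)
    (M M' : ℝ → Matrix (Fin n) (Fin n) ℝ)
    (hMderiv : ∀ t i j, HasDerivAt (fun s => M s i j) (M' t i j) t)
    (hM'cont : ∀ i j, Continuous fun t => M' t i j)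
    (hMsymm : ∀ t, (M t).IsSymm)
    (m₁ m₂ : ℝ) (hm₁ : 0 < m₁) (hm₁₂ : m₁ ≤ m₂)
    (hMlb : ∀ t, (M t - m₁ • (1 : Matrix (Fin n) (Fin n) ℝ)).PosSemidef)
    (hMub : ∀ t, (m₂ • (1 : Matrix (Fin n) (Fin n) ℝ) - M t).PosSemidef)
    (S D : ℝ → Matrix (Fin n) (Fin n) ℝ)
    (hSskew : ∀ t, (S t)ᵀ = -(S t))
    (hDsymm : ∀ t, (D t).IsSymm)
    (ε : ℝ) (hε : 0 < ε)
    (hgain : ∀ t, (D t + Kd + (1/2 : ℝ) • (1 : Matrix (Fin n) (Fin n) ℝ)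
        - (1/4 : ℝ) • ((M t)⁻¹ + M t)
        - ε • (1 : Matrix (Fin n) (Fin n) ℝ)).PosSemidef) :
    ∃ C ≥ (1 : ℝ), ∃ β > (0 : ℝ),
      ∀ qe σ : ℝ → Fin n → ℝ,
        (∀ t, HasDerivAt qe ((M t)⁻¹ *ᵥ (σ t - Λ *ᵥ qe t)) t) →
        (∀ t, HasDerivAt σ
            (-((M t)⁻¹ *ᵥ (Λ *ᵥ qe t))
              - (S t + D t - (1/2 : ℝ) • M' t + Kd) *ᵥ ((M t)⁻¹ *ᵥ σ t)) t) →
        ∀ t₀ t : ℝ, t₀ ≤ t →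
          Real.sqrt (qe t ⬝ᵥ qe t + σ t ⬝ᵥ σ t)
            ≤ C * Real.exp (-β * (t - t₀)) * Real.sqrt (qe t₀ ⬝ᵥ qe t₀ + σ t₀ ⬝ᵥ σ t₀) := by
  obtain ⟨bΛ, hbΛ, hΛlb⟩ := pd_coercive hΛpd
  have hm₂ : 0 < m₂ := lt_of_lt_of_le hm₁ hm₁₂
  have hcM : (0:ℝ) < m₂ + m₂/m₁^2 := by positivity
  have hθpos : (0:ℝ) < 1/2 + ε/(m₂ + m₂/m₁^2) := by positivity
  have hθgt : (1:ℝ)/2 < 1/2 + ε/(m₂ + m₂/m₁^2) := lt_add_of_pos_right _ (div_pos hε hcM)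
  have hinvθ : 1/(1/2 + ε/(m₂ + m₂/m₁^2)) < 2 := by
    rw [div_lt_iff₀ hθpos]; linarith
  set b : ℝ := min ((2 - 1/(1/2 + ε/(m₂ + m₂/m₁^2))) * (m₁/(m₂^2 * bΛ))) (ε/m₂) with hbdef
  have hb : 0 < b := by
    apply lt_min
    · apply mul_pos (by linarith) (by positivity)
    · positivity
  -- Lyapunov sandwich constants
  set SΛ : ℝ := ∑ i, ∑ j, |Λ i j| with hSΛ
  have hSΛnn : 0 ≤ SΛ := Finset.sum_nonneg fun i _ => Finset.sum_nonneg fun j _ => abs_nonneg _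
  set c₁ : ℝ := min (1/bΛ) (m₁/m₂^2) with hc₁def
  set c₂ : ℝ := max (SΛ + 1) (m₂/m₁^2) with hc₂def
  have hc₁ : 0 < c₁ := lt_min (by positivity) (by positivity)
  have hc₂ : 0 < c₂ := lt_of_lt_of_le (by linarith : (0:ℝ) < SΛ + 1) (le_max_left _ _)
  refine ⟨max 1 (Real.sqrt (c₂/c₁)), le_max_left _ _, b/2, half_pos hb, ?_⟩
  intro qe σ hqe hσ t₀ t ht
  -- matrix facts
  have hMpd : ∀ τ, (M τ).PosDef := fun τ => matpd_of_lb (hMsymm τ) hm₁ (hMlb τ)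
  have hinv : ∀ τ, M τ * (M τ)⁻¹ = 1 := fun τ =>
    Matrix.mul_nonsing_inv _ ((Matrix.isUnit_iff_isUnit_det _).1 (hMpd τ).isUnit)
  have hdet : ∀ τ, (M τ).det ≠ 0 := fun τ => (hMpd τ).det_pos.ne'
  have hNder : ∀ τ, ∀ i j : Fin n, HasDerivAt (fun r => (M r)⁻¹ i j)
      ((-((M τ)⁻¹ * M' τ * (M τ)⁻¹)) i j) τ := fun τ =>
    inv_hasDerivAt (hMderiv τ) (hdet τ) hinv
  -- the Lyapunov function and its derivative
  have hV : ∀ τ, HasDerivAt (fun r => qe r ⬝ᵥ (Λ *ᵥ qe r) + σ r ⬝ᵥ ((M r)⁻¹ *ᵥ σ r))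
      ((((M τ)⁻¹ *ᵥ (σ τ - Λ *ᵥ qe τ)) ⬝ᵥ (Λ *ᵥ qe τ)
        + qe τ ⬝ᵥ ((0 : Matrix (Fin n) (Fin n) ℝ) *ᵥ qe τ)
        + qe τ ⬝ᵥ (Λ *ᵥ ((M τ)⁻¹ *ᵥ (σ τ - Λ *ᵥ qe τ))))
      + ((-((M τ)⁻¹ *ᵥ (Λ *ᵥ qe τ)) - (S τ + D τ - (1/2 : ℝ) • M' τ + Kd) *ᵥ ((M τ)⁻¹ *ᵥ σ τ))
            ⬝ᵥ ((M τ)⁻¹ *ᵥ σ τ)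
          + σ τ ⬝ᵥ ((-((M τ)⁻¹ * M' τ * (M τ)⁻¹)) *ᵥ σ τ)
          + σ τ ⬝ᵥ ((M τ)⁻¹ *ᵥ (-((M τ)⁻¹ *ᵥ (Λ *ᵥ qe τ))
              - (S τ + D τ - (1/2 : ℝ) • M' τ + Kd) *ᵥ ((M τ)⁻¹ *ᵥ σ τ))))) τ := by
    intro τ
    have hconst : ∀ i j : Fin n, HasDerivAt (fun _ : ℝ => Λ i j)
        ((0 : Matrix (Fin n) (Fin n) ℝ) i j) τ := by
      intro i j
      simpa using hasDerivAt_const τ (Λ i j)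
    exact (hasDerivAt_quadform (hqe τ) (hqe τ) hconst).add
      (hasDerivAt_quadform (hσ τ) (hσ τ) (hNder τ))
  have hVb : ∀ τ, ((((M τ)⁻¹ *ᵥ (σ τ - Λ *ᵥ qe τ)) ⬝ᵥ (Λ *ᵥ qe τ)
        + qe τ ⬝ᵥ ((0 : Matrix (Fin n) (Fin n) ℝ) *ᵥ qe τ)
        + qe τ ⬝ᵥ (Λ *ᵥ ((M τ)⁻¹ *ᵥ (σ τ - Λ *ᵥ qe τ))))
      + ((-((M τ)⁻¹ *ᵥ (Λ *ᵥ qe τ)) - (S τ + D τ - (1/2 : ℝ) • M' τ + Kd) *ᵥ ((M τ)⁻¹ *ᵥ σ τ))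
            ⬝ᵥ ((M τ)⁻¹ *ᵥ σ τ)
          + σ τ ⬝ᵥ ((-((M τ)⁻¹ * M' τ * (M τ)⁻¹)) *ᵥ σ τ)
          + σ τ ⬝ᵥ ((M τ)⁻¹ *ᵥ (-((M τ)⁻¹ *ᵥ (Λ *ᵥ qe τ))
              - (S τ + D τ - (1/2 : ℝ) • M' τ + Kd) *ᵥ ((M τ)⁻¹ *ᵥ σ τ)))))
      + b * (qe τ ⬝ᵥ (Λ *ᵥ qe τ) + σ τ ⬝ᵥ ((M τ)⁻¹ *ᵥ σ τ)) ≤ 0 := by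
    intro τ
    have hk := key_ineq (M't := M' τ) hΛsymm hΛpd (hMsymm τ) (hSskew τ) hm₁ hm₁₂ hε hbΛ (hMlb τ) (hMub τ)
      (hgain τ) hΛlb (min_le_left _ _) (min_le_right _ _) (qe τ) (σ τ)
    linarith [hk]
  have hgron := gronwall_exp (V := fun r => qe r ⬝ᵥ (Λ *ᵥ qe r) + σ r ⬝ᵥ ((M r)⁻¹ *ᵥ σ r))
    hV hVb ht
  -- sandwich bounds
  have hsandwich : ∀ τ, c₁ * (qe τ ⬝ᵥ qe τ + σ τ ⬝ᵥ σ τ)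
        ≤ qe τ ⬝ᵥ (Λ *ᵥ qe τ) + σ τ ⬝ᵥ ((M τ)⁻¹ *ᵥ σ τ)
      ∧ qe τ ⬝ᵥ (Λ *ᵥ qe τ) + σ τ ⬝ᵥ ((M τ)⁻¹ *ᵥ σ τ)
        ≤ c₂ * (qe τ ⬝ᵥ qe τ + σ τ ⬝ᵥ σ τ) := by
    intro τ
    have hXnn : 0 ≤ qe τ ⬝ᵥ qe τ := dot_self_nonneg' _
    have hSgnn : 0 ≤ σ τ ⬝ᵥ σ τ := dot_self_nonneg' _
    have hLnn : 0 ≤ qe τ ⬝ᵥ (Λ *ᵥ qe τ) := psd_nonneg' hΛpd.posSemidef _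
    have hL1 : (1/bΛ) * (qe τ ⬝ᵥ qe τ) ≤ qe τ ⬝ᵥ (Λ *ᵥ qe τ) := by
      have h0 := mul_le_mul_of_nonneg_left (hΛlb (qe τ)) (le_of_lt (by positivity : (0:ℝ) < 1/bΛ))
      have e : (1/bΛ) * (bΛ * (qe τ ⬝ᵥ (Λ *ᵥ qe τ))) = qe τ ⬝ᵥ (Λ *ᵥ qe τ) := by
        rw [← mul_assoc, one_div_mul_cancel hbΛ.ne', one_mul]
      linarith [h0, e.le, e.ge]
    have hL2 : qe τ ⬝ᵥ (Λ *ᵥ qe τ) ≤ (SΛ + 1) * (qe τ ⬝ᵥ qe τ) := by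
      have h0 := qf_abs_bound Λ (qe τ)
      nlinarith [h0, hXnn]
    have hR := inv_qf_bounds (hMsymm τ) hm₁ hm₁₂ (hMlb τ) (hMub τ) (σ τ)
    constructor
    · have b1 : c₁ * (qe τ ⬝ᵥ qe τ) ≤ (1/bΛ) * (qe τ ⬝ᵥ qe τ) :=
        mul_le_mul_of_nonneg_right (min_le_left _ _) hXnn
      have b2 : c₁ * (σ τ ⬝ᵥ σ τ) ≤ (m₁/m₂^2) * (σ τ ⬝ᵥ σ τ) :=
        mul_le_mul_of_nonneg_right (min_le_right _ _) hSgnn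
      have br : c₁ * (qe τ ⬝ᵥ qe τ + σ τ ⬝ᵥ σ τ)
          = c₁ * (qe τ ⬝ᵥ qe τ) + c₁ * (σ τ ⬝ᵥ σ τ) := by ring
      linarith [hR.1, b1, b2, hL1, br.le, br.ge]
    · have b1 : (SΛ + 1) * (qe τ ⬝ᵥ qe τ) ≤ c₂ * (qe τ ⬝ᵥ qe τ) :=
        mul_le_mul_of_nonneg_right (le_max_left _ _) hXnn
      have b2 : (m₂/m₁^2) * (σ τ ⬝ᵥ σ τ) ≤ c₂ * (σ τ ⬝ᵥ σ τ) :=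
        mul_le_mul_of_nonneg_right (le_max_right _ _) hSgnn
      have br : c₂ * (qe τ ⬝ᵥ qe τ + σ τ ⬝ᵥ σ τ)
          = c₂ * (qe τ ⬝ᵥ qe τ) + c₂ * (σ τ ⬝ᵥ σ τ) := by ring
      linarith [hR.2, b1, b2, hL2, br.le, br.ge]
  -- assemble the final estimate
  have hE : (0:ℝ) < Real.exp (-(b * (t - t₀))) := Real.exp_pos _
  have hZt := (hsandwich t).1
  have hZt₀ := (hsandwich t₀).2
  have hchain : c₁ * (qe t ⬝ᵥ qe t + σ t ⬝ᵥ σ t)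
      ≤ (c₂ * (qe t₀ ⬝ᵥ qe t₀ + σ t₀ ⬝ᵥ σ t₀)) * Real.exp (-(b * (t - t₀))) := by
    calc c₁ * (qe t ⬝ᵥ qe t + σ t ⬝ᵥ σ t)
        ≤ qe t ⬝ᵥ (Λ *ᵥ qe t) + σ t ⬝ᵥ ((M t)⁻¹ *ᵥ σ t) := hZt
    _ ≤ (qe t₀ ⬝ᵥ (Λ *ᵥ qe t₀) + σ t₀ ⬝ᵥ ((M t₀)⁻¹ *ᵥ σ t₀)) * Real.exp (-(b * (t - t₀))) :=
        hgron
    _ ≤ (c₂ * (qe t₀ ⬝ᵥ qe t₀ + σ t₀ ⬝ᵥ σ t₀)) * Real.exp (-(b * (t - t₀))) :=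
        mul_le_mul_of_nonneg_right hZt₀ hE.le
  have hZ₀nn : 0 ≤ qe t₀ ⬝ᵥ qe t₀ + σ t₀ ⬝ᵥ σ t₀ :=
    add_nonneg (dot_self_nonneg' _) (dot_self_nonneg' _)
  have hZfinal : qe t ⬝ᵥ qe t + σ t ⬝ᵥ σ t
      ≤ (c₂/c₁) * (Real.exp (-(b * (t - t₀))) * (qe t₀ ⬝ᵥ qe t₀ + σ t₀ ⬝ᵥ σ t₀)) := by
    have e : (c₂/c₁) * (Real.exp (-(b * (t - t₀))) * (qe t₀ ⬝ᵥ qe t₀ + σ t₀ ⬝ᵥ σ t₀))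
        = ((c₂ * (qe t₀ ⬝ᵥ qe t₀ + σ t₀ ⬝ᵥ σ t₀)) * Real.exp (-(b * (t - t₀))))/c₁ := by
      field_simp
    rw [e, le_div_iff₀ hc₁]
    linarith [hchain]
  have hsqrt := Real.sqrt_le_sqrt hZfinal
  rw [Real.sqrt_mul (div_nonneg hc₂.le hc₁.le), Real.sqrt_mul hE.le] at hsqrt
  have hEsq : Real.sqrt (Real.exp (-(b * (t - t₀)))) = Real.exp (-(b/2) * (t - t₀)) := by
    have e : Real.exp (-(b * (t - t₀))) = (Real.exp (-(b/2) * (t - t₀)))^2 := by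
      rw [sq, ← Real.exp_add]
      ring_nf
    rw [e, Real.sqrt_sq (Real.exp_nonneg _)]
  rw [hEsq] at hsqrt
  calc Real.sqrt (qe t ⬝ᵥ qe t + σ t ⬝ᵥ σ t)
      ≤ Real.sqrt (c₂/c₁) * (Real.exp (-(b/2) * (t - t₀))
        * Real.sqrt (qe t₀ ⬝ᵥ qe t₀ + σ t₀ ⬝ᵥ σ t₀)) := hsqrt
  _ ≤ max 1 (Real.sqrt (c₂/c₁)) * (Real.exp (-(b/2) * (t - t₀))
        * Real.sqrt (qe t₀ ⬝ᵥ qe t₀ + σ t₀ ⬝ᵥ σ t₀)) :=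
      mul_le_mul_of_nonneg_right (le_max_right _ _)
        (mul_nonneg (Real.exp_nonneg _) (Real.sqrt_nonneg _))
  _ = max 1 (Real.sqrt (c₂/c₁)) * Real.exp (-(b/2) * (t - t₀))
        * Real.sqrt (qe t₀ ⬝ᵥ qe t₀ + σ t₀ ⬝ᵥ σ t₀) := by ring
end

section
/- Let n ≥ 1, let A : ℝ → ℝ^{n×n} and b : ℝ → ℝⁿ, and let P : ℝ → ℝ^{n×n} be differentiable with P(t) symmetric and c₁·I ⪯ P(t) ⪯ c₂·I for constants 0 < c₁ ≤ c₂ and all t (Loewner order). Let β > 0 and suppose that P'(t) + A(t)ᵀP(t) + P(t)A(t) ⪯ −2β·P(t) for all t. Then for any two differentiable solutions x₁, x₂ : ℝ → ℝⁿ of the time-varying affine system x'(t) = A(t)x(t) + b(t), one has ‖x₁(t) − x₂(t)‖ ≤ √(c₂/c₁) · e^{−β(t−t₀)} · ‖x₁(t₀) − x₂(t₀)‖ for all t ≥ t₀; i.e., the system is incrementally exponentially stable (contracting) with respect to the metric P. -/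
open Matrix

/-- a time-varying affine system satisfying the quadratic contraction condition
with metric `P(t)` is incrementally exponentially stable: any two solutions converge to each
other exponentially. -/
theorem affine_system_incrementally_exponentially_stable
    {n : ℕ} (hn : 1 ≤ n)
    (A : ℝ → Matrix (Fin n) (Fin n) ℝ) (b : ℝ → Fin n → ℝ)
    (P P' : ℝ → Matrix (Fin n) (Fin n) ℝ)
    (hPderiv : ∀ t i j, HasDerivAt (fun s => P s i j) (P' t i j) t)
    (hPsymm : ∀ t, (P t).IsSymm)
    (c₁ c₂ : ℝ) (hc₁ : 0 < c₁) (hc₁₂ : c₁ ≤ c₂)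
    (hPlb : ∀ t, (P t - c₁ • (1 : Matrix (Fin n) (Fin n) ℝ)).PosSemidef)
    (hPub : ∀ t, (c₂ • (1 : Matrix (Fin n) (Fin n) ℝ) - P t).PosSemidef)
    (β : ℝ) (hβ : 0 < β)
    (hLyap : ∀ t, ((-(2 * β)) • P t - (P' t + (A t)ᵀ * P t + P t * A t)).PosSemidef)
    (x₁ x₂ : ℝ → Fin n → ℝ)
    (hx₁ : ∀ t, HasDerivAt x₁ (A t *ᵥ x₁ t + b t) t)
    (hx₂ : ∀ t, HasDerivAt x₂ (A t *ᵥ x₂ t + b t) t) :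
    ∀ t₀ t : ℝ, t₀ ≤ t →
      Real.sqrt ((x₁ t - x₂ t) ⬝ᵥ (x₁ t - x₂ t))
        ≤ Real.sqrt (c₂ / c₁) * Real.exp (-β * (t - t₀)) *
            Real.sqrt ((x₁ t₀ - x₂ t₀) ⬝ᵥ (x₁ t₀ - x₂ t₀)) := by
  intro t₀ t ht
  set e : ℝ → Fin n → ℝ := fun s => x₁ s - x₂ s with he_def
  have he : ∀ s, HasDerivAt e (A s *ᵥ e s) s := by
    intro s
    have h := (hx₁ s).sub (hx₂ s)
    have heq : A s *ᵥ x₁ s + b s - (A s *ᵥ x₂ s + b s) = A s *ᵥ e s := by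
      simp [he_def, mulVec_sub]
    rwa [heq] at h
  have hei : ∀ s i, HasDerivAt (fun u => e u i) ((A s *ᵥ e s) i) s :=
    fun s i => hasDerivAt_pi.mp (he s) i
  set V : ℝ → ℝ := fun s => e s ⬝ᵥ (P s *ᵥ e s) with hV_def
  have hV : ∀ s, HasDerivAt V
      ((A s *ᵥ e s) ⬝ᵥ (P s *ᵥ e s) + e s ⬝ᵥ (P' s *ᵥ e s)
        + e s ⬝ᵥ (P s *ᵥ (A s *ᵥ e s))) s := by
    intro s
    have h : HasDerivAt (fun u => ∑ i, e u i * ∑ j, P u i j * e u j)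
        (∑ i, ((A s *ᵥ e s) i * ∑ j, P s i j * e s j
          + e s i * ∑ j, (P' s i j * e s j + P s i j * (A s *ᵥ e s) j))) s := by
      refine HasDerivAt.fun_sum fun i _ => ?_
      exact (hei s i).mul (HasDerivAt.fun_sum fun j _ => (hPderiv s i j).mul (hei s j))
    show HasDerivAt (fun u => ∑ i, e u i * ∑ j, P u i j * e u j) _ s
    convert h using 1
    simp [dotProduct, mulVec, Finset.sum_add_distrib, mul_add, Finset.mul_sum]
    ring
  have hVle : ∀ s,
      (A s *ᵥ e s) ⬝ᵥ (P s *ᵥ e s) + e s ⬝ᵥ (P' s *ᵥ e s)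
        + e s ⬝ᵥ (P s *ᵥ (A s *ᵥ e s)) ≤ -(2 * β) * V s := by
    intro s
    have h0 := (hLyap s).dotProduct_mulVec_nonneg (e s)
    have hrw : star (e s) ⬝ᵥ (((-(2 * β)) • P s - (P' s + (A s)ᵀ * P s + P s * A s)) *ᵥ e s)
        = -(2 * β) * V s - ((A s *ᵥ e s) ⬝ᵥ (P s *ᵥ e s) + e s ⬝ᵥ (P' s *ᵥ e s)
            + e s ⬝ᵥ (P s *ᵥ (A s *ᵥ e s))) := by
      have h1 : e s ⬝ᵥ (((A s)ᵀ * P s) *ᵥ e s) = (A s *ᵥ e s) ⬝ᵥ (P s *ᵥ e s) := by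
        rw [← mulVec_mulVec, dotProduct_mulVec, vecMul_transpose]
      have h2 : e s ⬝ᵥ ((P s * A s) *ᵥ e s) = e s ⬝ᵥ (P s *ᵥ (A s *ᵥ e s)) := by
        rw [← mulVec_mulVec]
      simp only [star_trivial, sub_mulVec, add_mulVec, dotProduct_sub, dotProduct_add,
        smul_mulVec, dotProduct_smul, h1, h2, hV_def, smul_eq_mul]
      ring
    rw [hrw] at h0
    linarith
  set W : ℝ → ℝ := fun s => V s * Real.exp (2 * β * s) with hW_def
  have hWd : ∀ s, HasDerivAt W
      (((A s *ᵥ e s) ⬝ᵥ (P s *ᵥ e s) + e s ⬝ᵥ (P' s *ᵥ e s)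
        + e s ⬝ᵥ (P s *ᵥ (A s *ᵥ e s))) * Real.exp (2 * β * s)
        + V s * (Real.exp (2 * β * s) * (2 * β))) s := by
    intro s
    have hlin : HasDerivAt (fun u : ℝ => 2 * β * u) (2 * β) s := by
      simpa using (hasDerivAt_id s).const_mul (2 * β)
    exact (hV s).mul hlin.exp
  have hWanti : Antitone W := by
    apply antitone_of_deriv_nonpos
    · intro s; exact (hWd s).differentiableAt
    · intro s
      rw [(hWd s).deriv]
      have h1 := hVle s
      have h2 : (0:ℝ) < Real.exp (2 * β * s) := Real.exp_pos _
      nlinarith [mul_le_mul_of_nonneg_right h1 h2.le]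
  have hWle : W t ≤ W t₀ := hWanti ht
  have hlb : c₁ * (e t ⬝ᵥ e t) ≤ V t := by
    have h0 := (hPlb t).dotProduct_mulVec_nonneg (e t)
    simp only [star_trivial, sub_mulVec, dotProduct_sub, smul_mulVec, one_mulVec,
      dotProduct_smul, smul_eq_mul] at h0
    simp only [hV_def]
    linarith
  have hub : V t₀ ≤ c₂ * (e t₀ ⬝ᵥ e t₀) := by
    have h0 := (hPub t₀).dotProduct_mulVec_nonneg (e t₀)
    simp only [star_trivial, sub_mulVec, dotProduct_sub, smul_mulVec, one_mulVec,
      dotProduct_smul, smul_eq_mul] at h0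
    simp only [hV_def] at h0 ⊢
    linarith
  set E : ℝ := Real.exp (-β * (t - t₀)) with hE_def
  have hE : Real.exp (2 * β * t₀) = E * E * Real.exp (2 * β * t) := by
    rw [hE_def, ← Real.exp_add, ← Real.exp_add]
    ring_nf
  have hX : (0:ℝ) < Real.exp (2 * β * t) := Real.exp_pos _
  have key : e t ⬝ᵥ e t ≤ (c₂ / c₁) * (E * E) * (e t₀ ⬝ᵥ e t₀) := by
    have hchain : c₁ * (e t ⬝ᵥ e t) * Real.exp (2 * β * t)
        ≤ c₂ * (e t₀ ⬝ᵥ e t₀) * (E * E) * Real.exp (2 * β * t) := by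
      have h1 : c₁ * (e t ⬝ᵥ e t) * Real.exp (2 * β * t) ≤ W t :=
        mul_le_mul_of_nonneg_right hlb hX.le
      have h2 : W t₀ ≤ c₂ * (e t₀ ⬝ᵥ e t₀) * (E * E) * Real.exp (2 * β * t) := by
        have := mul_le_mul_of_nonneg_right hub (Real.exp_nonneg (2 * β * t₀))
        calc W t₀ ≤ c₂ * (e t₀ ⬝ᵥ e t₀) * Real.exp (2 * β * t₀) := this
          _ = c₂ * (e t₀ ⬝ᵥ e t₀) * (E * E) * Real.exp (2 * β * t) := by rw [hE]; ring
      linarith [hWle]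
    have h3 : c₁ * (e t ⬝ᵥ e t) ≤ c₂ * (e t₀ ⬝ᵥ e t₀) * (E * E) :=
      le_of_mul_le_mul_right hchain hX
    rw [div_mul_eq_mul_div, div_mul_eq_mul_div, le_div_iff₀ hc₁]
    nlinarith [h3]
  have hsq : Real.sqrt (e t ⬝ᵥ e t)
      ≤ Real.sqrt (c₂ / c₁) * E * Real.sqrt (e t₀ ⬝ᵥ e t₀) := by
    calc Real.sqrt (e t ⬝ᵥ e t) ≤ Real.sqrt ((c₂ / c₁) * (E * E) * (e t₀ ⬝ᵥ e t₀)) :=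
          Real.sqrt_le_sqrt key
      _ = Real.sqrt (c₂ / c₁) * E * Real.sqrt (e t₀ ⬝ᵥ e t₀) := by
          have hc₂ : (0:ℝ) ≤ c₂ := hc₁.le.trans hc₁₂
          rw [Real.sqrt_mul (mul_nonneg (div_nonneg hc₂ hc₁.le) (mul_self_nonneg E)),
            Real.sqrt_mul (div_nonneg hc₂ hc₁.le),
            Real.sqrt_mul_self (Real.exp_nonneg _)]
  exact hsq
end

section
/- Let n ≥ 1, let Λ, K_d be constant symmetric n×n real matrices, let M : ℝ → ℝ^{n×n} be differentiable with M(t) symmetric and invertible for every t, let D : ℝ → ℝ^{n×n} with D(t) symmetric, and let S : ℝ → ℝ^{n×n} with S(t) skew-symmetric. Let δ = (δ₁, δ₂) : ℝ → ℝⁿ × ℝⁿ be differentiable and satisfy the variational dynamics δ₁'(t) = −M(t)⁻¹Λδ₁(t) + M(t)⁻¹δ₂(t) and δ₂'(t) = −M(t)⁻¹Λδ₁(t) − (S(t) + D(t) − (1/2)M'(t) + K_d)·M(t)⁻¹δ₂(t). Define V(t) := (1/2)·δ₁(t)ᵀΛδ₁(t) + (1/2)·δ₂(t)ᵀM(t)⁻¹δ₂(t).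 Then V'(t) = −(1/2)·δ(t)ᵀ P(t) Υ(t) P(t) δ(t), where P(t) is the 2n×2n block-diagonal matrix diag(Λ, M(t)⁻¹) and Υ(t) is the 2n×2n block matrix [[2M(t)⁻¹, M(t)⁻¹ − I], [M(t)⁻¹ − I, 2(D(t) + K_d)]]. -/
open Matrix

attribute [local instance] Matrix.linftyOpNormedRing Matrix.linftyOpNormedAlgebra

section aux
variable {n : ℕ}

lemma hasDerivAt_matrix {A : ℝ → Matrix (Fin n) (Fin n) ℝ}
    {A' : Matrix (Fin n) (Fin n) ℝ} {t : ℝ}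
    (h : ∀ i j, HasDerivAt (fun s => A s i j) (A' i j) t) :
    HasDerivAt A A' t := by
  have h1 : ∀ s, A s = ∑ i : Fin n, ∑ j : Fin n, (A s i j) • Matrix.single i j (1:ℝ) := by
    intro s
    conv_lhs => rw [matrix_eq_sum_single (A s)]
    simp [smul_single]
  have h2 : A' = ∑ i : Fin n, ∑ j : Fin n, (A' i j) • Matrix.single i j (1:ℝ) := by
    conv_lhs => rw [matrix_eq_sum_single A']
    simp [smul_single]
  rw [funext h1, h2]
  exact HasDerivAt.fun_sum fun i _ => HasDerivAt.fun_sum fun j _ => (h i j).smul_const _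

lemma hasDerivAt_entry {A : ℝ → Matrix (Fin n) (Fin n) ℝ}
    {A' : Matrix (Fin n) (Fin n) ℝ} {t : ℝ}
    (h : HasDerivAt A A' t) (i j : Fin n) :
    HasDerivAt (fun s => A s i j) (A' i j) t := by
  let L : Matrix (Fin n) (Fin n) ℝ →ₗ[ℝ] ℝ :=
    { toFun := fun B => B i j, map_add' := by intros; rfl, map_smul' := by intros; rfl }
  exact (LinearMap.toContinuousLinearMap L).hasFDerivAt.comp_hasDerivAt t h

/-- derivative of the matrix inverse. -/
lemma hasDerivAt_inv_entry {M : ℝ → Matrix (Fin n) (Fin n) ℝ}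
    {M' : Matrix (Fin n) (Fin n) ℝ} {t : ℝ}
    (hM : ∀ i j, HasDerivAt (fun s => M s i j) (M' i j) t)
    (hMinv : IsUnit (M t).det) (i j : Fin n) :
    HasDerivAt (fun s => (M s)⁻¹ i j) ((-((M t)⁻¹ * M' * (M t)⁻¹)) i j) t := by
  haveI : CompleteSpace (Matrix (Fin n) (Fin n) ℝ) := FiniteDimensional.complete ℝ _
  have hu : IsUnit (M t) := (Matrix.isUnit_iff_isUnit_det _).2 hMinv
  have hd : HasDerivAt M M' t := hasDerivAt_matrix hM
  have hcoe : (↑hu.unit⁻¹ : Matrix (Fin n) (Fin n) ℝ) = (M t)⁻¹ := by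
    rw [Matrix.nonsing_inv_eq_ringInverse, ← Ring.inverse_unit hu.unit, IsUnit.unit_spec]
  have hinv : HasDerivAt (fun s => Ring.inverse (M s))
      (-((M t)⁻¹ * M' * (M t)⁻¹)) t := by
    have h1 : HasFDerivAt Ring.inverse
        (-ContinuousLinearMap.mulLeftRight ℝ _ ↑hu.unit⁻¹ ↑hu.unit⁻¹) (M t) := by
      have := hasFDerivAt_ringInverse (𝕜 := ℝ) hu.unit
      rwa [IsUnit.unit_spec] at this
    have h0 := h1.comp_hasDerivAt t hd
    refine HasDerivAt.congr_deriv h0 ?_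
    simp [ContinuousLinearMap.mulLeftRight_apply, hcoe, mul_assoc]
  have heq : (fun s => (M s)⁻¹ i j) = fun s => Ring.inverse (M s) i j := by
    funext s; rw [Matrix.nonsing_inv_eq_ringInverse]
  rw [heq]
  exact hasDerivAt_entry hinv i j

end aux

section quad
variable {n : ℕ}

lemma hasDerivAt_quad {u v : ℝ → Fin n → ℝ} {u' v' : Fin n → ℝ}
    {A : ℝ → Matrix (Fin n) (Fin n) ℝ} {A' : Matrix (Fin n) (Fin n) ℝ} {t : ℝ}
    (hu : HasDerivAt u u' t) (hv : HasDerivAt v v' t)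
    (hA : ∀ i j, HasDerivAt (fun s => A s i j) (A' i j) t) :
    HasDerivAt (fun s => u s ⬝ᵥ (A s *ᵥ v s))
      (u' ⬝ᵥ (A t *ᵥ v t) + u t ⬝ᵥ (A' *ᵥ v t) + u t ⬝ᵥ (A t *ᵥ v' )) t := by
  have hui := hasDerivAt_pi.1 hu
  have hvi := hasDerivAt_pi.1 hv
  have key : HasDerivAt (fun s => ∑ i, u s i * ∑ j, A s i j * v s j)
      (∑ i, ((u' i) * (∑ j, A t i j * v t j)
        + u t i * (∑ j, (A' i j * v t j + A t i j * v' j)))) t :=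
    HasDerivAt.fun_sum fun i _ =>
      (hui i).mul (HasDerivAt.fun_sum fun j _ => (hA i j).mul (hvi j))
  refine key.congr_deriv ?_
  simp only [_root_.dotProduct, mulVec, Finset.mul_sum, Finset.sum_add_distrib, mul_add]
  ring_nf

lemma dot_symm {A : Matrix (Fin n) (Fin n) ℝ} (hA : Aᵀ = A) (u v : Fin n → ℝ) :
    u ⬝ᵥ (A *ᵥ v) = v ⬝ᵥ (A *ᵥ u) := by
  rw [Matrix.dotProduct_mulVec, ← Matrix.mulVec_transpose, hA, dotProduct_comm]

end quad


/-- the time derivative of the differential Lyapunov function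
`V = (1/2)δ₁ᵀΛδ₁ + (1/2)δ₂ᵀM⁻¹δ₂` along the variational dynamics of the virtual
closed-loop error system equals `-(1/2)δᵀ P Υ P δ` (equation (33) of the paper). -/
theorem differential_lyapunov_derivative
    {n : ℕ} (hn : 1 ≤ n)
    (Λ Kd : Matrix (Fin n) (Fin n) ℝ) (hΛsymm : Λ.IsSymm) (hKdsymm : Kd.IsSymm)
    (M M' : ℝ → Matrix (Fin n) (Fin n) ℝ)
    (hMderiv : ∀ t i j, HasDerivAt (fun s => M s i j) (M' t i j) t)
    (hMsymm : ∀ t, (M t).IsSymm)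
    (hMinv : ∀ t, IsUnit (M t).det)
    (D : ℝ → Matrix (Fin n) (Fin n) ℝ) (hDsymm : ∀ t, (D t).IsSymm)
    (S : ℝ → Matrix (Fin n) (Fin n) ℝ) (hSskew : ∀ t, (S t)ᵀ = -(S t))
    (δ₁ δ₂ : ℝ → Fin n → ℝ)
    (hδ₁ : ∀ t, HasDerivAt δ₁ (-((M t)⁻¹ *ᵥ (Λ *ᵥ δ₁ t)) + (M t)⁻¹ *ᵥ δ₂ t) t)
    (hδ₂ : ∀ t, HasDerivAt δ₂
        (-((M t)⁻¹ *ᵥ (Λ *ᵥ δ₁ t))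
          - (S t + D t - (1/2 : ℝ) • M' t + Kd) *ᵥ ((M t)⁻¹ *ᵥ δ₂ t)) t) :
    ∀ t, HasDerivAt
      (fun s => (1/2 : ℝ) * (δ₁ s ⬝ᵥ (Λ *ᵥ δ₁ s)) + (1/2 : ℝ) * (δ₂ s ⬝ᵥ ((M s)⁻¹ *ᵥ δ₂ s)))
      (-(1/2 : ℝ) * (Sum.elim (δ₁ t) (δ₂ t) ⬝ᵥ
        ((Matrix.fromBlocks Λ 0 0 (M t)⁻¹ *
          Matrix.fromBlocks ((2 : ℝ) • (M t)⁻¹) ((M t)⁻¹ - 1) ((M t)⁻¹ - 1)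
            ((2 : ℝ) • (D t + Kd)) *
          Matrix.fromBlocks Λ 0 0 (M t)⁻¹) *ᵥ Sum.elim (δ₁ t) (δ₂ t)))) t := by
  intro t
  set N := (M t)⁻¹ with hNdef
  have hNsymm : Nᵀ = N := by
    rw [hNdef, Matrix.transpose_nonsing_inv, (hMsymm t)]
  have h1 : HasDerivAt (fun s => δ₁ s ⬝ᵥ (Λ *ᵥ δ₁ s))
      ((-(N *ᵥ (Λ *ᵥ δ₁ t)) + N *ᵥ δ₂ t) ⬝ᵥ (Λ *ᵥ δ₁ t)
        + δ₁ t ⬝ᵥ ((0 : Matrix (Fin n) (Fin n) ℝ) *ᵥ δ₁ t)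
        + δ₁ t ⬝ᵥ (Λ *ᵥ (-(N *ᵥ (Λ *ᵥ δ₁ t)) + N *ᵥ δ₂ t))) t :=
    hasDerivAt_quad (hδ₁ t) (hδ₁ t) (fun i j => hasDerivAt_const t _)
  have h2 : HasDerivAt (fun s => δ₂ s ⬝ᵥ ((M s)⁻¹ *ᵥ δ₂ s))
      ((-(N *ᵥ (Λ *ᵥ δ₁ t)) - (S t + D t - (1/2 : ℝ) • M' t + Kd) *ᵥ (N *ᵥ δ₂ t)) ⬝ᵥ (N *ᵥ δ₂ t)
        + δ₂ t ⬝ᵥ ((-(N * M' t * N)) *ᵥ δ₂ t)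
        + δ₂ t ⬝ᵥ (N *ᵥ (-(N *ᵥ (Λ *ᵥ δ₁ t)) - (S t + D t - (1/2 : ℝ) • M' t + Kd) *ᵥ (N *ᵥ δ₂ t)))) t :=
    hasDerivAt_quad (hδ₂ t) (hδ₂ t) (hasDerivAt_inv_entry (hMderiv t) (hMinv t))
  have h := (h1.const_mul ((1:ℝ)/2)).add (h2.const_mul ((1:ℝ)/2))
  refine HasDerivAt.congr_deriv h ?_
  symm
  simp only [Matrix.fromBlocks_multiply, Matrix.fromBlocks_mulVec,
    sumElim_dotProduct_sumElim, Matrix.zero_mul, Matrix.mul_zero, add_zero, zero_add,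
    ← Matrix.mulVec_mulVec, Matrix.add_mulVec, Matrix.sub_mulVec, Matrix.neg_mulVec,
    Matrix.smul_mulVec, Matrix.mulVec_add, Matrix.mulVec_sub, Matrix.mulVec_neg,
    Matrix.one_mulVec, dotProduct_add, add_dotProduct, dotProduct_neg,
    neg_dotProduct, dotProduct_sub, sub_dotProduct, dotProduct_smul,
    smul_dotProduct, Matrix.zero_mulVec, Matrix.mulVec_zero, dotProduct_zero,
    zero_dotProduct, Matrix.mulVec_smul, Sum.elim_comp_inl, Sum.elim_comp_inr,
    smul_eq_mul]
  have c1 : δ₁ t ⬝ᵥ Λ *ᵥ (N *ᵥ (Λ *ᵥ δ₁ t)) = N *ᵥ (Λ *ᵥ δ₁ t) ⬝ᵥ (Λ *ᵥ δ₁ t) :=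
    dot_symm hΛsymm _ _
  have c2 : δ₁ t ⬝ᵥ Λ *ᵥ (N *ᵥ δ₂ t) = N *ᵥ δ₂ t ⬝ᵥ (Λ *ᵥ δ₁ t) := dot_symm hΛsymm _ _
  have c3 : δ₁ t ⬝ᵥ Λ *ᵥ (N *ᵥ (N *ᵥ δ₂ t)) = N *ᵥ (N *ᵥ δ₂ t) ⬝ᵥ (Λ *ᵥ δ₁ t) :=
    dot_symm hΛsymm _ _
  have c4 : δ₂ t ⬝ᵥ N *ᵥ (N *ᵥ (Λ *ᵥ δ₁ t)) = N *ᵥ (Λ *ᵥ δ₁ t) ⬝ᵥ (N *ᵥ δ₂ t) :=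
    dot_symm hNsymm _ _
  have c5 : δ₂ t ⬝ᵥ N *ᵥ (Λ *ᵥ δ₁ t) = Λ *ᵥ δ₁ t ⬝ᵥ (N *ᵥ δ₂ t) := dot_symm hNsymm _ _
  have c6 : δ₂ t ⬝ᵥ N *ᵥ (S t *ᵥ (N *ᵥ δ₂ t)) = S t *ᵥ (N *ᵥ δ₂ t) ⬝ᵥ (N *ᵥ δ₂ t) :=
    dot_symm hNsymm _ _
  have c7 : δ₂ t ⬝ᵥ N *ᵥ (D t *ᵥ (N *ᵥ δ₂ t)) = D t *ᵥ (N *ᵥ δ₂ t) ⬝ᵥ (N *ᵥ δ₂ t) :=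
    dot_symm hNsymm _ _
  have c8 : δ₂ t ⬝ᵥ N *ᵥ (Kd *ᵥ (N *ᵥ δ₂ t)) = Kd *ᵥ (N *ᵥ δ₂ t) ⬝ᵥ (N *ᵥ δ₂ t) :=
    dot_symm hNsymm _ _
  have c9 : δ₂ t ⬝ᵥ N *ᵥ (M' t *ᵥ (N *ᵥ δ₂ t)) = M' t *ᵥ (N *ᵥ δ₂ t) ⬝ᵥ (N *ᵥ δ₂ t) :=
    dot_symm hNsymm _ _
  have c10 : S t *ᵥ (N *ᵥ δ₂ t) ⬝ᵥ (N *ᵥ δ₂ t) = 0 := by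
    have h0 : S t *ᵥ (N *ᵥ δ₂ t) ⬝ᵥ (N *ᵥ δ₂ t)
        = -(S t *ᵥ (N *ᵥ δ₂ t) ⬝ᵥ (N *ᵥ δ₂ t)) := by
      conv_lhs => rw [dotProduct_comm, Matrix.dotProduct_mulVec,
        ← Matrix.mulVec_transpose, hSskew t, Matrix.neg_mulVec, neg_dotProduct,
        dotProduct_comm]
      rw [dotProduct_comm]
    linarith
  have c12 : N *ᵥ (N *ᵥ δ₂ t) ⬝ᵥ (Λ *ᵥ δ₁ t) = N *ᵥ (Λ *ᵥ δ₁ t) ⬝ᵥ (N *ᵥ δ₂ t) := by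
    rw [dotProduct_comm, dot_symm hNsymm, dotProduct_comm]
  have c13 : N *ᵥ δ₂ t ⬝ᵥ (Λ *ᵥ δ₁ t) = Λ *ᵥ δ₁ t ⬝ᵥ (N *ᵥ δ₂ t) := dotProduct_comm _ _
  linear_combination (-1/2 : ℝ) * c1 + (-1/2 : ℝ) * c3 + (1/2 : ℝ) * c5 + (1/2 : ℝ) * c6 +
    (-1/2 : ℝ) * c7 + (-1/2 : ℝ) * c8 + (1/4 : ℝ) * c9 + c10 + (-1/2 : ℝ) * c12 +
    (-1/2 : ℝ) * c13
end

section
/- Let M be a symmetric positive definite n×n real matrix and let K be a symmetric n×n real matrix. Then the 2n×2n block matrix Υ := [[2M⁻¹, M⁻¹ − I], [M⁻¹ − I, 2K]] is positive definite if and only if the n×n matrix K + (1/2)·I − (1/4)·(M⁻¹ + M) is positive definite. -/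
open Matrix

open scoped Matrix in
private theorem posDef_fromBlocks₁₁' {m l : Type*} [Fintype m] [DecidableEq m] [Fintype l]
    [DecidableEq l] {A : Matrix m m ℝ} (B : Matrix m l ℝ) (D : Matrix l l ℝ)
    (hA : A.PosDef) [Invertible A] :
    (Matrix.fromBlocks A B Bᴴ D).PosDef ↔ (D - Bᴴ * A⁻¹ * B).PosDef := by
  rw [Matrix.posDef_iff_dotProduct_mulVec, Matrix.posDef_iff_dotProduct_mulVec, Matrix.IsHermitian.fromBlocks₁₁ _ _ hA.1]
  constructor
  · refine fun h => ⟨h.1, fun x hx => ?_⟩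
    have hne : (Sum.elim (-((A⁻¹ * B) *ᵥ x)) x : m ⊕ l → ℝ) ≠ 0 := by
      intro hc
      apply hx
      funext i
      have := congrFun hc (Sum.inr i)
      simpa using this
    have := h.2 hne
    rw [dotProduct_mulVec, Matrix.schur_complement_eq₁₁ B D _ _ hA.1, neg_add_cancel,
      dotProduct_zero, zero_add] at this
    rw [dotProduct_mulVec]; exact this
  · refine fun h => ⟨h.1, fun z hz => ?_⟩
    rw [dotProduct_mulVec, ← Sum.elim_comp_inl_inr z, Matrix.schur_complement_eq₁₁ B D _ _ hA.1]
    by_cases hy : (z ∘ Sum.inr) = 0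
    · have hx : (z ∘ Sum.inl) ≠ 0 := by
        intro hc
        apply hz
        funext i
        cases i with
        | inl i => exact congrFun hc i
        | inr i => exact congrFun hy i
      have h1 : (0:ℝ) < star (z ∘ Sum.inl + (A⁻¹ * B) *ᵥ (z ∘ Sum.inr)) ᵥ* A ⬝ᵥ
          (z ∘ Sum.inl + (A⁻¹ * B) *ᵥ (z ∘ Sum.inr)) := by
        rw [hy, Matrix.mulVec_zero, add_zero, ← dotProduct_mulVec]
        exact hA.dotProduct_mulVec_pos hx
      have h2 : (0:ℝ) ≤ star (z ∘ Sum.inr) ᵥ* (D - Bᴴ * A⁻¹ * B) ⬝ᵥ (z ∘ Sum.inr) := by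
        rw [hy]; simp
      linarith
    · have h1 : (0:ℝ) ≤ star (z ∘ Sum.inl + (A⁻¹ * B) *ᵥ (z ∘ Sum.inr)) ᵥ* A ⬝ᵥ
          (z ∘ Sum.inl + (A⁻¹ * B) *ᵥ (z ∘ Sum.inr)) := by
        rw [← dotProduct_mulVec]
        exact (Matrix.posSemidef_iff_dotProduct_mulVec.mp hA.posSemidef).2 _
      have h2 : (0:ℝ) < star (z ∘ Sum.inr) ᵥ* (D - Bᴴ * A⁻¹ * B) ⬝ᵥ (z ∘ Sum.inr) := by
        rw [← dotProduct_mulVec]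
        exact h.2 hy
      linarith

private theorem posDef_smul_iff {l : Type*} [Fintype l] {c : ℝ} (hc : 0 < c)
    (A : Matrix l l ℝ) : (c • A).PosDef ↔ A.PosDef := by
  have key : ∀ (d : ℝ), 0 < d → ∀ (A : Matrix l l ℝ), A.PosDef → (d • A).PosDef := by
    intro d hd A hA
    refine Matrix.PosDef.of_dotProduct_mulVec_pos ?_ (fun x hx => ?_)
    · unfold Matrix.IsHermitian
      rw [Matrix.conjTranspose_smul, hA.1.eq]
      simp
    · rw [Matrix.smul_mulVec, dotProduct_smul, smul_eq_mul]
      exact mul_pos hd (hA.dotProduct_mulVec_pos hx)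
  constructor
  · intro h
    have := key c⁻¹ (by positivity) _ h
    rwa [smul_smul, inv_mul_cancel₀ hc.ne', one_smul] at this
  · exact key c hc A

/-- Schur-complement characterization of positive definiteness of the block
matrix `Υ = [[2M⁻¹, M⁻¹ − I], [M⁻¹ − I, 2K]]` (condition (25) of the paper). -/
theorem upsilon_posDef_iff_gain_condition
    {n : ℕ}
    (M K : Matrix (Fin n) (Fin n) ℝ)
    (hM : M.PosDef) (hK : K.IsSymm) :
    (Matrix.fromBlocks ((2 : ℝ) • M⁻¹) (M⁻¹ - 1) (M⁻¹ - 1) ((2 : ℝ) • K)).PosDef ↔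
      (K + (1/2 : ℝ) • (1 : Matrix (Fin n) (Fin n) ℝ) - (1/4 : ℝ) • (M⁻¹ + M)).PosDef := by
  have hdet : IsUnit M.det := hM.det_pos.ne'.isUnit
  have hMinv : (M⁻¹).PosDef := hM.inv
  have hA : ((2:ℝ) • M⁻¹).PosDef := (posDef_smul_iff two_pos M⁻¹).mpr hMinv
  have := hA.isUnit.invertible
  have hBH : (M⁻¹ - 1 : Matrix (Fin n) (Fin n) ℝ)ᴴ = M⁻¹ - 1 := by
    rw [Matrix.conjTranspose_sub, hMinv.1.eq, Matrix.conjTranspose_one]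
  have hAinv : ((2:ℝ) • M⁻¹)⁻¹ = (2⁻¹ : ℝ) • M := by
    apply Matrix.inv_eq_right_inv
    rw [Matrix.smul_mul, Matrix.mul_smul, smul_smul, Matrix.nonsing_inv_mul M hdet]
    norm_num
  have hiff := posDef_fromBlocks₁₁' (A := (2:ℝ) • M⁻¹) (M⁻¹ - 1) ((2:ℝ) • K) hA
  rw [hBH] at hiff
  rw [hiff, hAinv]
  have hS : (2:ℝ) • K - (M⁻¹ - 1) * ((2⁻¹:ℝ) • M) * (M⁻¹ - 1) =
      (2:ℝ) • (K + (1/2 : ℝ) • (1 : Matrix (Fin n) (Fin n) ℝ) - (1/4 : ℝ) • (M⁻¹ + M)) := by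
    have h1 : M⁻¹ * M = 1 := Matrix.nonsing_inv_mul M hdet
    have h2 : M * M⁻¹ = 1 := Matrix.mul_nonsing_inv M hdet
    simp only [Matrix.sub_mul, Matrix.mul_sub, Matrix.mul_smul, Matrix.smul_mul,
      Matrix.one_mul, Matrix.mul_one, h1, h2, smul_add, smul_sub, smul_smul]
    module
  rw [hS]
  exact posDef_smul_iff two_pos _
end

section
/- Let M : ℝⁿ → ℝ^{n×n} be differentiable with M(q) symmetric and invertible for every q. Fix q, p ∈ ℝⁿ and set v := M(q)⁻¹p. Define the matrices S(q,v) and N(q,v) by S(q,v)_{ij} := (1/2)·Σ_{k=1}^{n} v_k·(∂M_{ik}/∂q_j(q) − ∂M_{jk}/∂q_i(q)) and N(q,v)_{ij} := Σ_{k=1}^{n} (∂M_{ij}/∂q_k)(q)·v_k. Then [S(q,v) − (1/2)·N(q,v)]·v = ∇_q[(1/2)·pᵀM(q)⁻¹p], where the gradient on the right is the gradient at q of the map q ↦ (1/2)·pᵀM(q)⁻¹p with p held fixed. -/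
open Matrix

/-- Partial derivative of a scalar function on `ℝⁿ` at `q` in the `i`-th coordinate direction. -/
noncomputable def pderivAt {n : ℕ} (f : (Fin n → ℝ) → ℝ) (q : Fin n → ℝ) (i : Fin n) : ℝ :=
  fderiv ℝ f q (Pi.single i 1)

/-- The skew-symmetric Coriolis-type matrix
`S(q,v)_{ij} = (1/2)Σ_k v_k (∂M_{ik}/∂q_j − ∂M_{jk}/∂q_i)`. -/
noncomputable def coriolisS {n : ℕ} (M : (Fin n → ℝ) → Matrix (Fin n) (Fin n) ℝ)
    (q v : Fin n → ℝ) : Matrix (Fin n) (Fin n) ℝ :=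
  Matrix.of fun i j =>
    (1/2 : ℝ) * ∑ k, v k *
      (pderivAt (fun q' => M q' i k) q j - pderivAt (fun q' => M q' j k) q i)

/-- The derivative of `M` along the velocity `v`: `N(q,v)_{ij} = Σ_k (∂M_{ij}/∂q_k) v_k`. -/
noncomputable def mDot {n : ℕ} (M : (Fin n → ℝ) → Matrix (Fin n) (Fin n) ℝ)
    (q v : Fin n → ℝ) : Matrix (Fin n) (Fin n) ℝ :=
  Matrix.of fun i j => ∑ k, pderivAt (fun q' => M q' i j) q k * v k

private lemma diff_det' {n : ℕ} (N : (Fin n → ℝ) → Matrix (Fin n) (Fin n) ℝ)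
    (h : ∀ i j, Differentiable ℝ fun q => N q i j) :
    Differentiable ℝ fun q => (N q).det := by
  have e : (fun q => (N q).det)
      = fun q => ∑ σ : Equiv.Perm (Fin n), ((Equiv.Perm.sign σ : ℤ) : ℝ) * ∏ i, N q (σ i) i := by
    funext q; rw [Matrix.det_apply']
  rw [e]
  apply Differentiable.fun_sum
  intro σ _
  apply Differentiable.const_mul
  intro x
  exact (HasFDerivAt.finset_prod (fun i _ => ((h (σ i) i) x).hasFDerivAt)).differentiableAt

private lemma diff_inv_entry {n : ℕ} (M : (Fin n → ℝ) → Matrix (Fin n) (Fin n) ℝ)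
    (hMdiff : ∀ i j, Differentiable ℝ fun q => M q i j)
    (hMinv : ∀ q, IsUnit (M q).det) (a b : Fin n) :
    Differentiable ℝ fun q => (M q)⁻¹ a b := by
  have hdet : Differentiable ℝ fun q => (M q).det := diff_det' M hMdiff
  have hadj : Differentiable ℝ fun q => (M q).adjugate a b := by
    simp only [Matrix.adjugate_apply]
    apply diff_det'
    intro i j
    rcases eq_or_ne i b with h | h
    · simp only [Matrix.updateRow_apply, h, if_pos rfl]
      exact differentiable_const _
    · simp only [Matrix.updateRow_apply, if_neg h]
      exact hMdiff i j
  have e : (fun q => (M q)⁻¹ a b) = fun q => ((M q).det)⁻¹ * (M q).adjugate a b := by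
    funext q'
    rw [Matrix.inv_def, Matrix.smul_apply, Ring.inverse_eq_inv', smul_eq_mul]
  rw [e]
  exact (hdet.inv fun x => (hMinv x).ne_zero).mul hadj

/-- the port-Hamiltonian version of Arimoto's structural property
(equation (12) of the paper): `[S(q,v) − (1/2)Ṁ(q,v)]v = ∇_q[(1/2)pᵀM(q)⁻¹p]` for
`v = M(q)⁻¹p`. -/
theorem coriolis_property_hamiltonian
    {n : ℕ}
    (M : (Fin n → ℝ) → Matrix (Fin n) (Fin n) ℝ)
    (hMdiff : ∀ i j, Differentiable ℝ fun q => M q i j)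
    (hMsymm : ∀ q, (M q).IsSymm)
    (hMinv : ∀ q, IsUnit (M q).det)
    (q p v : Fin n → ℝ) (hv : v = (M q)⁻¹ *ᵥ p) :
    (coriolisS M q v - (1/2 : ℝ) • mDot M q v) *ᵥ v
      = fun i => pderivAt (fun q' => (1/2 : ℝ) * (p ⬝ᵥ ((M q')⁻¹ *ᵥ p))) q i := by
  have hGdiff : ∀ a b, Differentiable ℝ fun q => (M q)⁻¹ a b :=
    diff_inv_entry M hMdiff hMinv
  classical
  funext i
  -- abbreviations
  set Dm : Fin n → Fin n → ℝ := fun a b => pderivAt (fun q' => M q' a b) q i with hDm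
  set Dg : Fin n → Fin n → ℝ := fun a b => pderivAt (fun q' => (M q')⁻¹ a b) q i with hDg
  -- Identity 1: derivative of M * M⁻¹ = 1
  have hid1 : ∀ a b, ∑ k, (M q a k * Dg k b + (M q)⁻¹ k b * Dm a k) = 0 := by
    intro a b
    have h1 : HasFDerivAt (fun q' => ∑ k, M q' a k * (M q')⁻¹ k b)
        (∑ k, (M q a k • fderiv ℝ (fun q' => (M q')⁻¹ k b) q
          + (M q)⁻¹ k b • fderiv ℝ (fun q' => M q' a k) q)) q :=
      HasFDerivAt.fun_sum fun k _ =>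
        (hMdiff a k q).hasFDerivAt.mul ((hGdiff k b q).hasFDerivAt)
    have hconst : (fun q' => ∑ k, M q' a k * (M q')⁻¹ k b)
        = fun _ => (1 : Matrix (Fin n) (Fin n) ℝ) a b := by
      funext q'
      rw [← Matrix.mul_apply, Matrix.mul_nonsing_inv _ (hMinv q')]
    have h0 : HasFDerivAt (fun q' => ∑ k, M q' a k * (M q')⁻¹ k b) (0 : (Fin n → ℝ) →L[ℝ] ℝ) q :=
      (hasFDerivAt_const ((1 : Matrix (Fin n) (Fin n) ℝ) a b) q).congr_of_eventuallyEq
        (Filter.Eventually.of_forall fun y => congrFun hconst y)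
    have huniq := h1.unique h0
    have hap := congrArg (fun L : (Fin n → ℝ) →L[ℝ] ℝ => L (Pi.single i 1)) huniq
    simp only [ContinuousLinearMap.sum_apply, ContinuousLinearMap.add_apply,
      ContinuousLinearMap.coe_smul', Pi.smul_apply, ContinuousLinearMap.zero_apply,
      smul_eq_mul] at hap
    simp only [hDg, hDm, pderivAt]
    exact hap
  -- Identity 2: Dg = -G0 Dm G0
  have hid2 : ∀ a b, Dg a b = -∑ l, ∑ k, (M q)⁻¹ a l * (Dm l k * (M q)⁻¹ k b) := by
    intro a b
    have step : ∀ l, ∑ k, M q l k * Dg k b = -∑ k, (M q)⁻¹ k b * Dm l k := by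
      intro l
      have := hid1 l b
      rw [Finset.sum_add_distrib] at this
      linarith [this]
    calc Dg a b = ∑ k, ((M q)⁻¹ * M q) a k * Dg k b := by
          rw [Matrix.nonsing_inv_mul _ (hMinv q)]
          simp [Matrix.one_apply, Finset.sum_ite_eq]
      _ = ∑ k, (∑ l, (M q)⁻¹ a l * M q l k) * Dg k b := by
          simp [Matrix.mul_apply]
      _ = ∑ l, (M q)⁻¹ a l * ∑ k, M q l k * Dg k b := by
          simp only [Finset.sum_mul, Finset.mul_sum, mul_assoc]
          rw [Finset.sum_comm]
      _ = ∑ l, (M q)⁻¹ a l * (-∑ k, (M q)⁻¹ k b * Dm l k) := by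
          exact Finset.sum_congr rfl fun l _ => by rw [step l]
      _ = -∑ l, ∑ k, (M q)⁻¹ a l * (Dm l k * (M q)⁻¹ k b) := by
          rw [← Finset.sum_neg_distrib]
          refine Finset.sum_congr rfl fun l _ => ?_
          rw [mul_neg, Finset.mul_sum]
          congr 1
          exact Finset.sum_congr rfl fun k _ => by ring
  -- symmetric inverse
  have hGsym : ((M q)⁻¹)ᵀ = (M q)⁻¹ := by
    rw [Matrix.transpose_nonsing_inv, (hMsymm q).eq]
  set Dmm : Matrix (Fin n) (Fin n) ℝ := Matrix.of Dm with hDmm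
  set Dgm : Matrix (Fin n) (Fin n) ℝ := Matrix.of Dg with hDgm
  have hid2' : Dgm = -((M q)⁻¹ * (Dmm * (M q)⁻¹)) := by
    ext a b
    simp only [hDgm, Matrix.of_apply, Matrix.neg_apply, Matrix.mul_apply]
    rw [hid2 a b]
    congr 1
    refine Finset.sum_congr rfl fun l _ => ?_
    rw [Finset.mul_sum]
    exact Finset.sum_congr rfl fun k _ => by simp [hDmm, mul_assoc]
  -- RHS computation
  have hrhs : pderivAt (fun q' => (1/2:ℝ) * (p ⬝ᵥ ((M q')⁻¹ *ᵥ p))) q i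
      = (1/2:ℝ) * (p ⬝ᵥ (Dgm *ᵥ p)) := by
    have hF : HasFDerivAt (fun q' => (1/2:ℝ) * ∑ a, p a * ∑ b, (M q')⁻¹ a b * p b)
        ((1/2:ℝ) • ∑ a, p a • ∑ b, p b • fderiv ℝ (fun q' => (M q')⁻¹ a b) q) q := by
      apply HasFDerivAt.const_mul
      apply HasFDerivAt.fun_sum; intro a _
      apply HasFDerivAt.const_mul
      apply HasFDerivAt.fun_sum; intro b _
      exact ((hGdiff a b) q).hasFDerivAt.mul_const (p b)
    have e : (fun q' => (1/2:ℝ) * (p ⬝ᵥ ((M q')⁻¹ *ᵥ p)))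
        = fun q' => (1/2:ℝ) * ∑ a, p a * ∑ b, (M q')⁻¹ a b * p b := by
      funext q'; simp [Matrix.mulVec, dotProduct]
    simp only [pderivAt]
    rw [e, hF.fderiv]
    simp only [ContinuousLinearMap.smul_apply, ContinuousLinearMap.sum_apply,
      ContinuousLinearMap.coe_smul', Pi.smul_apply, smul_eq_mul]
    simp only [Matrix.mulVec, dotProduct, hDgm, Matrix.of_apply, hDg, pderivAt]
    congr 1
    refine Finset.sum_congr rfl fun a _ => ?_
    congr 1
    exact Finset.sum_congr rfl fun b _ => mul_comm _ _
  -- matrix algebra on the RHS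
  have hrhs2 : (1/2:ℝ) * (p ⬝ᵥ (Dgm *ᵥ p)) = -(1/2:ℝ) * (v ⬝ᵥ (Dmm *ᵥ v)) := by
    rw [hid2', Matrix.neg_mulVec, dotProduct_neg,
      ← Matrix.mulVec_mulVec, ← Matrix.mulVec_mulVec,
      Matrix.dotProduct_mulVec, ← Matrix.mulVec_transpose, hGsym, ← hv, hv,
      Matrix.mulVec_mulVec, ← hv]
    ring
  rw [hrhs, hrhs2]
  -- LHS computation
  have hdot : v ⬝ᵥ (Dmm *ᵥ v) = ∑ j, v j * ∑ k, Dm j k * v k := by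
    simp [dotProduct, Matrix.mulVec, hDmm]
  rw [hdot]
  simp only [Matrix.mulVec, dotProduct, Matrix.sub_apply, Matrix.smul_apply, coriolisS, mDot,
    Matrix.of_apply, smul_eq_mul]
  -- now pure finite-sum algebra
  simp only [hDm]
  have cancel : ∑ x, ((1:ℝ)/2 * ∑ k, v k * pderivAt (fun q' => M q' i k) q x) * v x
      = ∑ x, ((1:ℝ)/2 * ∑ k, pderivAt (fun q' => M q' i x) q k * v k) * v x := by
    simp only [Finset.mul_sum, Finset.sum_mul]
    rw [Finset.sum_comm]
    exact Finset.sum_congr rfl fun x _ => Finset.sum_congr rfl fun k _ => by ring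
  calc ∑ x, ((1:ℝ)/2 * ∑ k, v k * (pderivAt (fun q' => M q' i k) q x
            - pderivAt (fun q' => M q' x k) q i)
        - (1:ℝ)/2 * ∑ k, pderivAt (fun q' => M q' i x) q k * v k) * v x
      = ∑ x, (((1:ℝ)/2 * ∑ k, v k * pderivAt (fun q' => M q' i k) q x) * v x
          - ((1:ℝ)/2 * ∑ k, pderivAt (fun q' => M q' i x) q k * v k) * v x
          - ((1:ℝ)/2 * ∑ k, v k * pderivAt (fun q' => M q' x k) q i) * v x) := by
        refine Finset.sum_congr rfl fun x _ => ?_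
        rw [show (∑ k, v k * (pderivAt (fun q' => M q' i k) q x
              - pderivAt (fun q' => M q' x k) q i))
            = ∑ k, v k * pderivAt (fun q' => M q' i k) q x
              - ∑ k, v k * pderivAt (fun q' => M q' x k) q i from by
          rw [← Finset.sum_sub_distrib]
          exact Finset.sum_congr rfl fun k _ => mul_sub _ _ _]
        ring
    _ = -((1:ℝ)/2) * ∑ j, v j * ∑ k, pderivAt (fun q' => M q' j k) q i * v k := by
        rw [Finset.sum_sub_distrib, Finset.sum_sub_distrib, cancel, sub_self, zero_sub,
          ← Finset.sum_neg_distrib, Finset.mul_sum]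
        refine Finset.sum_congr rfl fun x _ => ?_
        rw [show (∑ k, v k * pderivAt (fun q' => M q' x k) q i)
            = ∑ k, pderivAt (fun q' => M q' x k) q i * v k from
          Finset.sum_congr rfl fun k _ => mul_comm _ _]
        ring
end

section
/- Let M : ℝⁿ → ℝ^{n×n} be differentiable with M(q) symmetric for every q. Fix q, v ∈ ℝⁿ. Define the matrices S(q,v) and N(q,v) by S(q,v)_{ij} := (1/2)·Σ_{k=1}^{n} v_k·(∂M_{ik}/∂q_j(q) − ∂M_{jk}/∂q_i(q)) and N(q,v)_{ij} := Σ_{k=1}^{n} (∂M_{ij}/∂q_k)(q)·v_k. Then [S(q,v) − (1/2)·N(q,v)]·v = −∇_q[(1/2)·vᵀM(q)v], where the gradient on the right is the gradient at q of the map q ↦ (1/2)·vᵀM(q)v with v held fixed. -/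
open Matrix

lemma pderivAt_sum {n : ℕ} {ι : Type*} (s : Finset ι) (g : ι → (Fin n → ℝ) → ℝ)
    (q : Fin n → ℝ) (i : Fin n) (h : ∀ j ∈ s, DifferentiableAt ℝ (g j) q) :
    pderivAt (fun q' => ∑ j ∈ s, g j q') q i = ∑ j ∈ s, pderivAt (g j) q i := by
  unfold pderivAt
  rw [fderiv_fun_sum h]
  simp

lemma pderivAt_const_mul {n : ℕ} (c : ℝ) (g : (Fin n → ℝ) → ℝ) (q : Fin n → ℝ) (i : Fin n)
    (hg : DifferentiableAt ℝ g q) :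
    pderivAt (fun q' => c * g q') q i = c * pderivAt g q i := by
  unfold pderivAt
  rw [fderiv_const_mul hg c]
  simp

lemma pderivAt_mul_const {n : ℕ} (c : ℝ) (g : (Fin n → ℝ) → ℝ) (q : Fin n → ℝ) (i : Fin n)
    (hg : DifferentiableAt ℝ g q) :
    pderivAt (fun q' => g q' * c) q i = pderivAt g q i * c := by
  unfold pderivAt
  rw [fderiv_mul_const hg c]
  simp [mul_comm]

lemma key_algebra {n : ℕ} (a b : Fin n → Fin n → ℝ) (v : Fin n → ℝ) :
    ∑ j, ((1/2 : ℝ) * ∑ k, v k * (a j k - b j k)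
        - (1/2 : ℝ) * ∑ k, a k j * v k) * v j
      = -((1/2 : ℝ) * ∑ j, v j * ∑ k, b j k * v k) := by
  have h : ∑ j, (∑ k, v k * a j k) * v j = ∑ j, (∑ k, a k j * v k) * v j := by
    simp only [Finset.sum_mul]
    rw [Finset.sum_comm]
    exact Finset.sum_congr rfl fun j _ => Finset.sum_congr rfl fun k _ => by ring
  calc ∑ j, ((1/2 : ℝ) * ∑ k, v k * (a j k - b j k)
        - (1/2 : ℝ) * ∑ k, a k j * v k) * v j
      = ∑ j, ((1/2 : ℝ) * ((∑ k, v k * a j k) * v j)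
        - (1/2 : ℝ) * ((∑ k, v k * b j k) * v j)
        - (1/2 : ℝ) * ((∑ k, a k j * v k) * v j)) := by
        refine Finset.sum_congr rfl fun j _ => ?_
        rw [show (∑ k, v k * (a j k - b j k))
            = (∑ k, v k * a j k) - ∑ k, v k * b j k by
          simp [mul_sub, Finset.sum_sub_distrib]]
        ring
    _ = (1/2 : ℝ) * (∑ j, (∑ k, v k * a j k) * v j)
        - (1/2 : ℝ) * (∑ j, (∑ k, v k * b j k) * v j)
        - (1/2 : ℝ) * (∑ j, (∑ k, a k j * v k) * v j) := by
        simp [Finset.sum_sub_distrib, Finset.mul_sum]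
    _ = -((1/2 : ℝ) * ∑ j, (∑ k, v k * b j k) * v j) := by rw [h]; ring
    _ = -((1/2 : ℝ) * ∑ j, v j * ∑ k, b j k * v k) := by
        have h2 : ∀ j, (∑ k, v k * b j k) * v j = v j * ∑ k, b j k * v k := fun j => by
          rw [Finset.sum_mul, Finset.mul_sum]
          exact Finset.sum_congr rfl fun k _ => by ring
        simp only [h2]

/-- Arimoto's structural property (equation (11) of the paper):
`[S(q,v) − (1/2)Ṁ(q,v)]v = −∇_q[(1/2)vᵀM(q)v]`. -/
theorem coriolis_property_lagrangian
    {n : ℕ}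
    (M : (Fin n → ℝ) → Matrix (Fin n) (Fin n) ℝ)
    (hMdiff : ∀ i j, Differentiable ℝ fun q => M q i j)
    (hMsymm : ∀ q, (M q).IsSymm)
    (q v : Fin n → ℝ) :
    (coriolisS M q v - (1/2 : ℝ) • mDot M q v) *ᵥ v
      = -fun i => pderivAt (fun q' => (1/2 : ℝ) * (v ⬝ᵥ (M q' *ᵥ v))) q i := by
  have hfun : (fun q' => (1/2 : ℝ) * (v ⬝ᵥ (M q' *ᵥ v)))
      = fun q' => ∑ j, ∑ k, (1/2 : ℝ) * (v j * M q' j k * v k) := by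
    funext q'
    simp only [dotProduct, mulVec, Finset.mul_sum]
    exact Finset.sum_congr rfl fun j _ => Finset.sum_congr rfl fun k _ => by ring
  have hquad : ∀ i, pderivAt (fun q' => (1/2 : ℝ) * (v ⬝ᵥ (M q' *ᵥ v))) q i
      = (1/2 : ℝ) * ∑ j, v j * ∑ k, pderivAt (fun q' => M q' j k) q i * v k := by
    intro i
    rw [hfun]
    rw [pderivAt_sum Finset.univ _ q i (fun j _ => by
      apply DifferentiableAt.fun_sum
      intro k _
      exact (((hMdiff j k).differentiableAt.const_mul (v j)).mul_const (v k)).const_mul _)]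
    rw [Finset.mul_sum]
    refine Finset.sum_congr rfl fun j _ => ?_
    rw [pderivAt_sum Finset.univ _ q i (fun k _ =>
      (((hMdiff j k).differentiableAt.const_mul (v j)).mul_const (v k)).const_mul _)]
    rw [Finset.mul_sum, Finset.mul_sum]
    refine Finset.sum_congr rfl fun k _ => ?_
    rw [pderivAt_const_mul _ _ q i
      (((hMdiff j k).differentiableAt.const_mul (v j)).mul_const (v k)),
      pderivAt_mul_const _ _ q i ((hMdiff j k).differentiableAt.const_mul (v j)),
      pderivAt_const_mul _ _ q i (hMdiff j k).differentiableAt]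
    ring
  funext i
  simp only [Pi.neg_apply]
  rw [hquad i]
  simp only [mulVec, dotProduct, Matrix.sub_apply,
    Matrix.smul_apply, coriolisS, mDot, Matrix.of_apply, smul_eq_mul]
  exact key_algebra (fun j k => pderivAt (fun q' => M q' i k) q j)
    (fun j k => pderivAt (fun q' => M q' j k) q i) v
end

section
/- Let Λ be a symmetric n×n real matrix with λ₁·I ⪯ Λ ⪯ λ₂·I for constants 0 < λ₁ ≤ λ₂, and let M : ℝ → ℝ^{n×n} with M(t) symmetric and m₁·I ⪯ M(t) ⪯ m₂·I for constants 0 < m₁ ≤ m₂ and all t (Loewner order). Then every differentiable x : ℝ → ℝⁿ satisfying x'(t) = −M(t)⁻¹Λ·x(t) obeys ‖x(t)‖ ≤ √(λ₂/λ₁)·e^{−(λ₁/m₂)(t−t₀)}·‖x(t₀)‖ for all t ≥ t₀; in particular x(t) → 0 exponentially. -/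
open Matrix

private lemma symm_dot {n : ℕ} {B : Matrix (Fin n) (Fin n) ℝ} (hB : Bᵀ = B)
    (u v : Fin n → ℝ) : u ⬝ᵥ (B *ᵥ v) = v ⬝ᵥ (B *ᵥ u) := by
  rw [dotProduct_mulVec, dotProduct_comm, ← mulVec_transpose, hB]

private lemma psd_dot {n : ℕ} {B : Matrix (Fin n) (Fin n) ℝ} (hB : B.PosSemidef)
    (v : Fin n → ℝ) : 0 ≤ v ⬝ᵥ (B *ᵥ v) := by
  simpa using hB.dotProduct_mulVec_nonneg v

private lemma dps_nonneg {n : ℕ} (v : Fin n → ℝ) : 0 ≤ v ⬝ᵥ v :=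
  Finset.sum_nonneg fun i _ => mul_self_nonneg (v i)

private lemma cs_psd {n : ℕ} {B : Matrix (Fin n) (Fin n) ℝ} (hB : B.PosSemidef)
    (a b : Fin n → ℝ) :
    (a ⬝ᵥ (B *ᵥ b)) ^ 2 ≤ (a ⬝ᵥ (B *ᵥ a)) * (b ⬝ᵥ (B *ᵥ b)) := by
  have hBt : Bᵀ = B := by
    have := hB.isHermitian
    simpa [Matrix.IsHermitian, Matrix.IsSymm, conjTranspose_eq_transpose_of_trivial] using this
  have key : ∀ s : ℝ, 0 ≤ (b ⬝ᵥ (B *ᵥ b)) * (s * s) + (2 * (a ⬝ᵥ (B *ᵥ b))) * s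
      + (a ⬝ᵥ (B *ᵥ a)) := by
    intro s
    have h0 : 0 ≤ (s • b + a) ⬝ᵥ (B *ᵥ (s • b + a)) := psd_dot hB _
    have hsym := symm_dot hBt a b
    simp only [mulVec_add, mulVec_smul, dotProduct_add, add_dotProduct,
      smul_dotProduct, dotProduct_smul, smul_eq_mul] at h0
    rw [← hsym] at h0
    ring_nf at h0 ⊢
    linarith
  have := discrim_le_zero key
  simp only [discrim] at this
  nlinarith [this]

/-- exponential stability of the position-error dynamics
`x' = −M(t)⁻¹Λx` on the sliding manifold, with explicit rate `λ₁/m₂` and overshoot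
constant `√(λ₂/λ₁)`. -/
theorem position_error_dynamics_exponentially_stable
    {n : ℕ}
    (Λ : Matrix (Fin n) (Fin n) ℝ) (hΛsymm : Λ.IsSymm)
    (lam₁ lam₂ : ℝ) (hlam₁ : 0 < lam₁) (hlam₁₂ : lam₁ ≤ lam₂)
    (hΛlb : (Λ - lam₁ • (1 : Matrix (Fin n) (Fin n) ℝ)).PosSemidef)
    (hΛub : (lam₂ • (1 : Matrix (Fin n) (Fin n) ℝ) - Λ).PosSemidef)
    (M : ℝ → Matrix (Fin n) (Fin n) ℝ) (hMsymm : ∀ t, (M t).IsSymm)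
    (m₁ m₂ : ℝ) (hm₁ : 0 < m₁) (hm₁₂ : m₁ ≤ m₂)
    (hMlb : ∀ t, (M t - m₁ • (1 : Matrix (Fin n) (Fin n) ℝ)).PosSemidef)
    (hMub : ∀ t, (m₂ • (1 : Matrix (Fin n) (Fin n) ℝ) - M t).PosSemidef)
    (x : ℝ → Fin n → ℝ)
    (hx : ∀ t, HasDerivAt x (-((M t)⁻¹ *ᵥ (Λ *ᵥ x t))) t) :
    ∀ t₀ t : ℝ, t₀ ≤ t →
      Real.sqrt (x t ⬝ᵥ x t)
        ≤ Real.sqrt (lam₂ / lam₁) * Real.exp (-(lam₁ / m₂) * (t - t₀)) *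
            Real.sqrt (x t₀ ⬝ᵥ x t₀) := by
  intro t₀ t ht
  have hm₂ : 0 < m₂ := lt_of_lt_of_le hm₁ hm₁₂
  have hlam₂ : 0 < lam₂ := lt_of_lt_of_le hlam₁ hlam₁₂
  set k : ℝ := lam₁ / m₂ with hk
  have hkpos : 0 < k := div_pos hlam₁ hm₂
  set V : ℝ → ℝ := fun s => x s ⬝ᵥ (Λ *ᵥ x s) with hV
  -- basic quadratic form bounds for Λ
  have hΛt : Λᵀ = Λ := hΛsymm
  have hΛlb' : ∀ v : Fin n → ℝ, lam₁ * (v ⬝ᵥ v) ≤ v ⬝ᵥ (Λ *ᵥ v) := by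
    intro v
    have := psd_dot hΛlb v
    simp only [sub_mulVec, smul_mulVec, one_mulVec, dotProduct_sub,
      dotProduct_smul, smul_eq_mul] at this
    linarith
  have hΛub' : ∀ v : Fin n → ℝ, v ⬝ᵥ (Λ *ᵥ v) ≤ lam₂ * (v ⬝ᵥ v) := by
    intro v
    have := psd_dot hΛub v
    simp only [sub_mulVec, smul_mulVec, one_mulVec, dotProduct_sub,
      dotProduct_smul, smul_eq_mul] at this
    linarith
  have hMub' : ∀ s (v : Fin n → ℝ), v ⬝ᵥ (M s *ᵥ v) ≤ m₂ * (v ⬝ᵥ v) := by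
    intro s v
    have := psd_dot (hMub s) v
    simp only [sub_mulVec, smul_mulVec, one_mulVec, dotProduct_sub,
      dotProduct_smul, smul_eq_mul] at this
    linarith
  have hMlb' : ∀ s (v : Fin n → ℝ), m₁ * (v ⬝ᵥ v) ≤ v ⬝ᵥ (M s *ᵥ v) := by
    intro s v
    have := psd_dot (hMlb s) v
    simp only [sub_mulVec, smul_mulVec, one_mulVec, dotProduct_sub,
      dotProduct_smul, smul_eq_mul] at this
    linarith
  -- M s is positive definite, hence invertible
  have hMherm : ∀ s, (M s).IsHermitian := by
    intro s
    have := hMsymm s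
    simpa [Matrix.IsHermitian, Matrix.IsSymm, conjTranspose_eq_transpose_of_trivial] using this
  have hMpd : ∀ s, (M s).PosDef := by
    intro s
    refine Matrix.PosDef.of_dotProduct_mulVec_pos (hMherm s) fun v hv => ?_
    have h1 := hMlb' s v
    have h2 : 0 < v ⬝ᵥ v :=
      lt_of_le_of_ne (dps_nonneg v) (fun h => hv (dotProduct_self_eq_zero.1 h.symm))
    simp only [star_trivial]
    nlinarith
  have hMinv : ∀ s, M s * (M s)⁻¹ = 1 := fun s =>
    mul_nonsing_inv _ (hMpd s).det_pos.ne'.isUnit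
  -- key quadratic form inequality for M⁻¹
  have hMinv_dot : ∀ s (y : Fin n → ℝ),
      (1 / m₂) * (y ⬝ᵥ y) ≤ ((M s)⁻¹ *ᵥ y) ⬝ᵥ y := by
    intro s y
    set u : Fin n → ℝ := (M s)⁻¹ *ᵥ y with hu
    have hMu : M s *ᵥ u = y := by
      rw [hu, mulVec_mulVec, hMinv s, one_mulVec]
    have hMt : (M s)ᵀ = M s := hMsymm s
    have hMpsd : (M s).PosSemidef := (hMpd s).posSemidef
    have h1 : u ⬝ᵥ (M s *ᵥ y) = y ⬝ᵥ y := by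
      rw [symm_dot hMt u y, hMu]
    have hcs := cs_psd hMpsd u y
    rw [h1] at hcs
    have h2 : y ⬝ᵥ (M s *ᵥ y) ≤ m₂ * (y ⬝ᵥ y) := hMub' s y
    have h3 : u ⬝ᵥ y = u ⬝ᵥ (M s *ᵥ u) := by rw [hMu]
    have h4 : 0 ≤ u ⬝ᵥ (M s *ᵥ u) := psd_dot hMpsd u
    rcases eq_or_lt_of_le (dps_nonneg y) with h0 | h0
    · have hy0 : y = 0 := dotProduct_self_eq_zero.1 h0.symm
      simp [hy0]
    · have h5 : (y ⬝ᵥ y)^2 ≤ (u ⬝ᵥ (M s *ᵥ u)) * (m₂ * (y ⬝ᵥ y)) := by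
        nlinarith
      rw [h3, one_div, inv_mul_le_iff₀ hm₂]
      nlinarith [h5, mul_pos hm₂ h0]
  -- derivative of V
  have hVderiv : ∀ s, HasDerivAt V
      (-(2 * ((((M s)⁻¹ *ᵥ (Λ *ᵥ x s)) ⬝ᵥ (Λ *ᵥ x s))))) s := by
    intro s
    set v : Fin n → ℝ := -((M s)⁻¹ *ᵥ (Λ *ᵥ x s)) with hv
    have hxi : ∀ i, HasDerivAt (fun r => x r i) (v i) s :=
      fun i => hasDerivAt_pi.1 (hx s) i
    have hform : HasDerivAt V (v ⬝ᵥ (Λ *ᵥ x s) + x s ⬝ᵥ (Λ *ᵥ v)) s := by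
      have : HasDerivAt (fun r => ∑ i, x r i * ∑ j, Λ i j * x r j)
          (∑ i, (v i * ∑ j, Λ i j * x s j + x s i * ∑ j, Λ i j * v j)) s := by
        refine HasDerivAt.fun_sum fun i _ => ?_
        exact (hxi i).mul (HasDerivAt.fun_sum fun j _ => (hxi j).const_mul (Λ i j))
      rw [Finset.sum_add_distrib] at this
      simp only [hV, dotProduct, mulVec]
      exact this
    have heq : v ⬝ᵥ (Λ *ᵥ x s) + x s ⬝ᵥ (Λ *ᵥ v)
        = -(2 * (((M s)⁻¹ *ᵥ (Λ *ᵥ x s)) ⬝ᵥ (Λ *ᵥ x s))) := by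
      have := symm_dot hΛt (x s) v
      rw [this, hv]
      simp [neg_dotProduct]
      ring
    rw [← heq]
    exact hform
  -- the differential inequality: V' ≤ -2k V
  have hVineq : ∀ s, -(2 * ((((M s)⁻¹ *ᵥ (Λ *ᵥ x s)) ⬝ᵥ (Λ *ᵥ x s)))) ≤ -(2*k) * V s := by
    intro s
    set y : Fin n → ℝ := Λ *ᵥ x s with hy
    have h1 : (1 / m₂) * (y ⬝ᵥ y) ≤ ((M s)⁻¹ *ᵥ y) ⬝ᵥ y := hMinv_dot s y
    -- y ⬝ y ≥ lam₁ * V s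
    have h2 : lam₁ * V s ≤ y ⬝ᵥ y := by
      set B : Matrix (Fin n) (Fin n) ℝ := Λ - lam₁ • 1 with hB
      have hBt : Bᵀ = B := by
        rw [hB, transpose_sub, hΛt, transpose_smul, transpose_one]
      have hBpsd := hΛlb
      have hxB : 0 ≤ x s ⬝ᵥ (B *ᵥ x s) := psd_dot hΛlb _
      have hBB : 0 ≤ (B *ᵥ x s) ⬝ᵥ (B *ᵥ x s) := dps_nonneg _
      have hyB : y = B *ᵥ x s + lam₁ • x s := by
        rw [hy, hB]
        simp [sub_mulVec, smul_mulVec]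
      have hVs : V s = x s ⬝ᵥ (B *ᵥ x s) + lam₁ * (x s ⬝ᵥ x s) := by
        simp [hV, hB, sub_mulVec, smul_mulVec, dotProduct_sub, dotProduct_smul]
      have hcross : (B *ᵥ x s) ⬝ᵥ x s = x s ⬝ᵥ (B *ᵥ x s) := dotProduct_comm _ _
      rw [hyB, hVs]
      simp only [dotProduct_add, add_dotProduct, smul_dotProduct, dotProduct_smul,
        smul_eq_mul]
      nlinarith
    have h3 : 0 ≤ y ⬝ᵥ y := dps_nonneg y
    have : k * V s ≤ ((M s)⁻¹ *ᵥ y) ⬝ᵥ y := by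
      rw [hk]
      calc lam₁ / m₂ * V s ≤ (1/m₂) * (y ⬝ᵥ y) := by
            rw [div_mul_eq_mul_div, one_div, inv_mul_eq_div, div_le_div_iff₀ hm₂ hm₂]
            nlinarith
        _ ≤ _ := h1
    linarith
  -- Gronwall via antitone auxiliary function
  set g : ℝ → ℝ := fun s => V s * Real.exp (2 * k * s) with hg
  have hgderiv : ∀ s, HasDerivAt g
      ((-(2 * ((((M s)⁻¹ *ᵥ (Λ *ᵥ x s)) ⬝ᵥ (Λ *ᵥ x s)))) + 2 * k * V s) * Real.exp (2*k*s)) s := by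
    intro s
    have he : HasDerivAt (fun r => Real.exp (2*k*r)) (2*k*Real.exp (2*k*s)) s := by
      have := ((hasDerivAt_id s).const_mul (2*k)).exp
      simpa [mul_comm] using this
    have := (hVderiv s).fun_mul he
    exact this.congr_deriv (by ring)
  have hganti : AntitoneOn g (Set.univ) := by
    refine antitoneOn_of_deriv_nonpos convex_univ ?_ ?_ ?_
    · exact fun s _ => ((hgderiv s).continuousAt).continuousWithinAt
    · exact fun s _ => ((hgderiv s).differentiableAt).differentiableWithinAt
    · intro s _
      rw [(hgderiv s).deriv]
      have h1 := hVineq s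
      have h2 := Real.exp_pos (2*k*s)
      have : (-(2 * ((((M s)⁻¹ *ᵥ (Λ *ᵥ x s)) ⬝ᵥ (Λ *ᵥ x s)))) + 2 * k * V s) ≤ 0 := by
        nlinarith
      nlinarith
  have hgle : g t ≤ g t₀ := hganti (Set.mem_univ t₀) (Set.mem_univ t) ht
  -- final bound
  have hVt : V t * Real.exp (2*k*t) ≤ V t₀ * Real.exp (2*k*t₀) := hgle
  have hVbound : V t ≤ V t₀ * Real.exp (-(2*k) * (t - t₀)) := by
    have he := Real.exp_pos (2*k*t)
    rw [← le_div_iff₀ he] at hVt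
    calc V t ≤ V t₀ * Real.exp (2*k*t₀) / Real.exp (2*k*t) := hVt
      _ = V t₀ * Real.exp (-(2*k) * (t - t₀)) := by
          rw [mul_div_assoc, ← Real.exp_sub]
          ring_nf
  have hxx_t : lam₁ * (x t ⬝ᵥ x t) ≤ V t := hΛlb' (x t)
  have hV0 : V t₀ ≤ lam₂ * (x t₀ ⬝ᵥ x t₀) := hΛub' (x t₀)
  have hexp : 0 < Real.exp (-(2*k) * (t - t₀)) := Real.exp_pos _
  have hfinal : x t ⬝ᵥ x t ≤ (lam₂ / lam₁) * Real.exp (-(2*k)*(t-t₀)) * (x t₀ ⬝ᵥ x t₀) := by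
    have h0 : 0 ≤ x t₀ ⬝ᵥ x t₀ := dps_nonneg _
    have : lam₁ * (x t ⬝ᵥ x t) ≤ lam₂ * (x t₀ ⬝ᵥ x t₀) * Real.exp (-(2*k)*(t-t₀)) := by
      calc lam₁ * (x t ⬝ᵥ x t) ≤ V t := hxx_t
        _ ≤ V t₀ * Real.exp (-(2*k)*(t-t₀)) := hVbound
        _ ≤ lam₂ * (x t₀ ⬝ᵥ x t₀) * Real.exp (-(2*k)*(t-t₀)) := by nlinarith
    rw [div_mul_eq_mul_div, div_mul_eq_mul_div, le_div_iff₀ hlam₁]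
    nlinarith
  have hsq := Real.sqrt_le_sqrt hfinal
  have hrw : Real.sqrt ((lam₂ / lam₁) * Real.exp (-(2*k)*(t-t₀)) * (x t₀ ⬝ᵥ x t₀))
      = Real.sqrt (lam₂ / lam₁) * Real.exp (-k*(t-t₀)) * Real.sqrt (x t₀ ⬝ᵥ x t₀) := by
    rw [Real.sqrt_mul (by positivity), Real.sqrt_mul (by positivity)]
    congr 2
    have h2 : Real.exp (-(2*k)*(t-t₀)) = Real.exp (-k*(t-t₀)) ^ 2 := by
      rw [sq, ← Real.exp_add]; ring_nf
    rw [h2, Real.sqrt_sq (Real.exp_pos _).le]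
  rw [hrw] at hsq
  exact hsq
end
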